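/- arXiv:1509.00106 — 2 statements merged into one kernel-verified Lean document; each statement's English description precedes it below -/
import Mathlib

section
/- Run the algorithm with c̄ = 1 and with the quadratic prox-function b(u) := (1/2)‖u − ū^c‖². Then F(x^k) − F* ≤ ‖A‖²·‖x⁰ − x*‖²/(2γ₁·k) + 3γ₁·D_U/k for every k ≥ 1; in particular, if x⁰ ≠ x*, D_U > 0 and γ₁ := ‖A‖·‖x⁰ − x*‖/√(6·D_U), then F(x^k) − F* ≤ ‖x⁰ − x*‖·‖A‖·√(6·D_U)/k for every k ≥ 1. -/
open scoped RealInnerProductSpace BigOperators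

lemma aux_eps (a b c r : ℝ) (hcr : 0 ≤ c * r)
    (h : ∀ t : ℝ, 0 < t → t ≤ 1 → a + c * (1 - t) * r ≤ b) : a + c * r ≤ b := by
  rcases eq_or_lt_of_le hcr with hcr0 | hcr0
  · have h1 := h 1 one_pos le_rfl
    nlinarith [h1]
  · apply le_of_forall_pos_le_add
    intro ε hε
    set t := min 1 (ε / (c * r)) with ht
    have ht0 : 0 < t := lt_min one_pos (div_pos hε hcr0)
    have ht1 : t ≤ 1 := min_le_left _ _
    have h2 := h t ht0 ht1
    have htcr : t * (c * r) ≤ ε := by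
      calc t * (c * r) ≤ (ε / (c * r)) * (c * r) :=
            mul_le_mul_of_nonneg_right (min_le_right _ _) (le_of_lt hcr0)
        _ = ε := by field_simp; exact div_self (ne_of_gt hcr0)
    nlinarith [h2]

lemma aux_combo_norm_sq {p : ℕ} (a b : EuclideanSpace ℝ (Fin p)) (t : ℝ) :
    ‖(1-t)•a + t•b‖^2 = (1-t)*‖a‖^2 + t*‖b‖^2 - t*(1-t)*‖a-b‖^2 := by
  have h1 := norm_add_sq_real ((1-t)•a) (t•b)
  have h2 := norm_sub_sq_real a b
  have h3 : ⟪(1-t)•a, t•b⟫ = (1-t)*(t*⟪a,b⟫) := by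
    rw [real_inner_smul_left, real_inner_smul_right]
  have h4 : ‖(1-t)•a‖^2 = (1-t)^2*‖a‖^2 := by rw [norm_smul]; simp [mul_pow, sq_abs]
  have h5 : ‖t•b‖^2 = t^2*‖b‖^2 := by rw [norm_smul]; simp [mul_pow, sq_abs]
  rw [h1, h3, h4, h5, h2]; ring

lemma aux_descent {p : ℕ} (F : EuclideanSpace ℝ (Fin p) → ℝ)
    (G : EuclideanSpace ℝ (Fin p) → EuclideanSpace ℝ (Fin p)) (Lc : ℝ) (hLc : 0 ≤ Lc)
    (hcvx : ∀ x y, F x + ⟪G x, y - x⟫ ≤ F y)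
    (hlip : ∀ x y, ‖G x - G y‖ ≤ Lc * ‖x - y‖) (xx d : EuclideanSpace ℝ (Fin p)) :
    F (xx + d) ≤ F xx + ⟪G xx, d⟫ + Lc/2*‖d‖^2 := by
  have hIle : ∀ t : ℝ, 0 ≤ t → ⟪G (xx + t • d), d⟫ ≤ ⟪G xx, d⟫ + t * (Lc * ‖d‖^2) := by
    intro t ht
    have h1 : ⟪G (xx + t • d), d⟫ - ⟪G xx, d⟫ = ⟪G (xx + t • d) - G xx, d⟫ := by
      rw [inner_sub_left]
    have h2 : ⟪G (xx + t • d) - G xx, d⟫ ≤ ‖G (xx + t • d) - G xx‖ * ‖d‖ :=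
      real_inner_le_norm _ _
    have h3 := hlip (xx + t • d) xx
    have h4 : ‖xx + t • d - xx‖ = t * ‖d‖ := by
      rw [show xx + t • d - xx = t • d from by abel, norm_smul, Real.norm_eq_abs,
        abs_of_nonneg ht]
    rw [h4] at h3
    have h5 : ‖G (xx + t • d) - G xx‖ * ‖d‖ ≤ Lc * (t * ‖d‖) * ‖d‖ :=
      mul_le_mul_of_nonneg_right h3 (norm_nonneg _)
    nlinarith [h5]
  have key : ∀ m : ℕ, ∀ j : ℕ, j ≤ m + 1 →
      F (xx + ((j:ℝ)*(1/((m:ℝ)+1))) • d)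
        ≤ F xx + ((j:ℝ)*(1/((m:ℝ)+1)))*⟪G xx, d⟫
          + (Lc*‖d‖^2) * ((j:ℝ)*((j:ℝ)+1)/2) * (1/((m:ℝ)+1))^2 := by
    intro m j
    have hM : (0:ℝ) < (m:ℝ)+1 := by positivity
    induction j with
    | zero => intro _; simp
    | succ i ih =>
      intro hj
      have ih' := ih (le_trans (Nat.le_succ i) hj)
      have hstep := hcvx (xx + (((i:ℝ)+1)*(1/((m:ℝ)+1))) • d)
        (xx + ((i:ℝ)*(1/((m:ℝ)+1))) • d)
      have hdiff : (xx + ((i:ℝ)*(1/((m:ℝ)+1))) • d) - (xx + (((i:ℝ)+1)*(1/((m:ℝ)+1))) • d)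
          = (((i:ℝ)*(1/((m:ℝ)+1))) - (((i:ℝ)+1)*(1/((m:ℝ)+1)))) • d := by
        rw [sub_smul]; abel
      have hcoef : ((i:ℝ)*(1/((m:ℝ)+1))) - (((i:ℝ)+1)*(1/((m:ℝ)+1))) = -(1/((m:ℝ)+1)) := by
        ring
      rw [hdiff, hcoef, real_inner_smul_right] at hstep
      have hIle' := hIle (((i:ℝ)+1)*(1/((m:ℝ)+1))) (by positivity)
      have hm1 := mul_le_mul_of_nonneg_left hIle' (by positivity : (0:ℝ) ≤ 1/((m:ℝ)+1))
      have hcast : ((i+1 : ℕ):ℝ) = (i:ℝ)+1 := by push_cast; ring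
      rw [hcast]
      linarith [ih', hstep, hm1]
  apply le_of_forall_pos_le_add
  intro ε hε
  obtain ⟨m, hm⟩ := exists_nat_gt ((Lc*‖d‖^2) / ε)
  have hM : (0:ℝ) < (m:ℝ)+1 := by positivity
  have hkey := key m (m+1) le_rfl
  have hcast : ((m+1 : ℕ):ℝ) = (m:ℝ)+1 := by push_cast; ring
  have hone : ((m:ℝ)+1)*(1/((m:ℝ)+1)) = 1 := by field_simp
  rw [hcast, hone, one_smul, one_mul] at hkey
  have hb1 : (Lc*‖d‖^2) * (((m:ℝ)+1)*(((m:ℝ)+1)+1)/2) * (1/((m:ℝ)+1))^2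
      = Lc/2*‖d‖^2 + (Lc*‖d‖^2) * (1/(2*((m:ℝ)+1))) := by
    field_simp
  rw [hb1] at hkey
  have hb3 : (Lc*‖d‖^2) * (1/(2*((m:ℝ)+1))) ≤ ε := by
    have hnn : (0:ℝ) ≤ Lc*‖d‖^2 := by positivity
    have hlt : Lc*‖d‖^2 < ε * ((m:ℝ)) := by
      have h6 := (div_lt_iff₀ hε).mp hm
      linarith [h6]
    rw [mul_one_div, div_le_iff₀ (by positivity : (0:ℝ) < 2*((m:ℝ)+1))]
    nlinarith [hlt, hε.le, Nat.cast_nonneg (α := ℝ) m]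
  linarith [hkey, hb3]
set_option maxHeartbeats 1000000 in
theorem stmt_16
    {n : ℕ} (hn : 1 ≤ n)
    (U : Set (EuclideanSpace ℝ (Fin n)))
    (hUne : U.Nonempty) (hUcl : IsClosed U) (hUcx : Convex ℝ U)
    (φ : EuclideanSpace ℝ (Fin n) → EReal)
    (hφbot : ∀ v, φ v ≠ ⊥)
    (hφlsc : LowerSemicontinuous φ)
    (hφcx : ∀ v w : EuclideanSpace ℝ (Fin n), ∀ a c : ℝ, 0 ≤ a → 0 ≤ c → a + c = 1 →
      φ (a • v + c • w) ≤ (a : EReal) * φ v + (c : EReal) * φ w)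
    (hφdom : ∃ v ∈ U, φ v ≠ ⊤)
    (uc : EuclideanSpace ℝ (Fin n)) (hucU : uc ∈ U)
    (ustar : ℝ → EuclideanSpace ℝ (Fin n) → EuclideanSpace ℝ (Fin n))
    (humem : ∀ γ > (0:ℝ), ∀ z, ustar γ z ∈ U)
    (hufin : ∀ γ > (0:ℝ), ∀ z, φ (ustar γ z) ≠ ⊤)
    (humax : ∀ γ > (0:ℝ), ∀ z, ∀ v ∈ U,
      (⟪z, v⟫ : EReal) - φ v - ((γ * ((1/2) * ‖v - uc‖^2) : ℝ) : EReal)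
        ≤ (⟪z, ustar γ z⟫ : EReal) - φ (ustar γ z)
          - ((γ * ((1/2) * ‖ustar γ z - uc‖^2) : ℝ) : EReal))
    (φs : ℝ → EuclideanSpace ℝ (Fin n) → ℝ)
    (hφs : ∀ γ z, φs γ z = ⟪z, ustar γ z⟫ - (φ (ustar γ z)).toReal
        - γ * ((1/2) * ‖ustar γ z - uc‖^2))
    {p : ℕ} (hp : 1 ≤ p)
    (A : EuclideanSpace ℝ (Fin n) →L[ℝ] EuclideanSpace ℝ (Fin p))
    (hAnorm : 0 < ‖A‖)
    (DU : ℝ)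
    (hDUbdd : BddAbove ((fun v => (1/2) * ‖v - uc‖^2) '' {v | v ∈ U ∧ φ v ≠ ⊤}))
    (hDU : DU = sSup ((fun v => (1/2) * ‖v - uc‖^2) '' {v | v ∈ U ∧ φ v ≠ ⊤}))
    (f : EuclideanSpace ℝ (Fin p) → EReal)
    (hf : ∀ x, f x = ⨆ v ∈ U, ((⟪x, A v⟫ : EReal) - φ v))
    (g : EuclideanSpace ℝ (Fin p) → EReal)
    (hgbot : ∀ y, g y ≠ ⊥)
    (hgdom : ∃ y, g y ≠ ⊤)
    (hglsc : LowerSemicontinuous g)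
    (hgcx : ∀ y w : EuclideanSpace ℝ (Fin p), ∀ a c : ℝ, 0 ≤ a → 0 ≤ c → a + c = 1 →
      g (a • y + c • w) ≤ (a : EReal) * g y + (c : EReal) * g w)
    (prox : ℝ → EuclideanSpace ℝ (Fin p) → EuclideanSpace ℝ (Fin p))
    (hprox : ∀ β > (0:ℝ), ∀ x y,
      g (prox β x) + (((2*β)⁻¹ * ‖prox β x - x‖^2 : ℝ) : EReal)
        ≤ g y + (((2*β)⁻¹ * ‖y - x‖^2 : ℝ) : EReal))
    (hproxu : ∀ β > (0:ℝ), ∀ x y,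
      (∀ w, g y + (((2*β)⁻¹ * ‖y - x‖^2 : ℝ) : EReal)
          ≤ g w + (((2*β)⁻¹ * ‖w - x‖^2 : ℝ) : EReal)) → y = prox β x)
    (γ1 : ℝ) (hγ1 : 0 < γ1)
    (τ : ℕ → ℝ) (hτ : ∀ k : ℕ, τ k = 1/((k:ℝ) + 1))
    (γs : ℕ → ℝ) (hγs : ∀ k : ℕ, γs (k+1) = γ1 / ((k:ℝ) + 1))
    (x xt xh : ℕ → EuclideanSpace ℝ (Fin p))
    (hxt0 : xt 0 = x 0) (hx0dom : f (x 0) + g (x 0) ≠ ⊤)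
    (hxh : ∀ k : ℕ, xh k = (1 - τ k) • x k + τ k • xt k)
    (hxrec : ∀ k : ℕ, x (k+1)
        = prox (γs (k+1)/‖A‖^2) (xh k - (γs (k+1)/‖A‖^2) • A (ustar (γs (k+1)) ((ContinuousLinearMap.adjoint A) (xh k)))))
    (hxtrec : ∀ k : ℕ, xt (k+1) = xt k - (τ k)⁻¹ • (xh k - x (k+1)))
    (xs : EuclideanSpace ℝ (Fin p)) (Fs : ℝ)
    (hFs : f xs + g xs = (Fs : EReal)) (hFmin : ∀ y, (Fs : EReal) ≤ f y + g y)
    :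
    (∀ k : ℕ, 1 ≤ k →
      (f (x k) + g (x k)) - (Fs : EReal)
        ≤ ((‖A‖^2 * ‖x 0 - xs‖^2 / (2*γ1*(k:ℝ)) + 3*γ1*DU/(k:ℝ) : ℝ) : EReal)) ∧
    (x 0 ≠ xs → 0 < DU → γ1 = ‖A‖ * ‖x 0 - xs‖ / Real.sqrt (6*DU) →
      ∀ k : ℕ, 1 ≤ k →
        (f (x k) + g (x k)) - (Fs : EReal)
          ≤ ((‖x 0 - xs‖ * ‖A‖ * Real.sqrt (6*DU) / (k:ℝ) : ℝ) : EReal)) := by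
  classical
  set AT : EuclideanSpace ℝ (Fin p) →L[ℝ] EuclideanSpace ℝ (Fin n) := ContinuousLinearMap.adjoint A with hAT
  obtain ⟨v0, hv0U, hv0fin⟩ := hφdom
  have hadj_inner : ∀ (w : EuclideanSpace ℝ (Fin p)) (v : EuclideanSpace ℝ (Fin n)),
      ⟪AT w, v⟫ = ⟪w, A v⟫ :=
    fun w v => ContinuousLinearMap.adjoint_inner_left A v w
  have hL : (0:ℝ) < ‖A‖^2 := by positivity
  have hbD : ∀ v ∈ U, φ v ≠ ⊤ → (1/2)*‖v - uc‖^2 ≤ DU := by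
    intro v hv hfin; rw [hDU]
    exact le_csSup hDUbdd ⟨v, ⟨hv, hfin⟩, rfl⟩
  have hDnn : 0 ≤ DU := le_trans (by positivity) (hbD v0 hv0U hv0fin)
  have hφu : ∀ γ, 0 < γ → ∀ z, φ (ustar γ z) = (((φ (ustar γ z)).toReal : ℝ) : EReal) :=
    fun γ hγ z => (EReal.coe_toReal (hufin γ hγ z) (hφbot _)).symm
  -- Lemma A : real form of the maximality hypothesis
  have hA_real : ∀ γ, 0 < γ → ∀ z, ∀ v ∈ U, φ v ≠ ⊤ →
      ⟪z, v⟫ - (φ v).toReal - γ*((1/2)*‖v - uc‖^2) ≤ φs γ z := by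
    intro γ hγ z v hv hfin
    have h := humax γ hγ z v hv
    rw [hφu γ hγ z, show φ v = (((φ v).toReal : ℝ) : EReal) from
      (EReal.coe_toReal hfin (hφbot v)).symm] at h
    rw [← EReal.coe_sub, ← EReal.coe_sub, ← EReal.coe_sub, ← EReal.coe_sub] at h
    have h' := EReal.coe_le_coe_iff.mp h
    rw [hφs]; linarith
  -- strong concavity
  have hStrong : ∀ γ, 0 < γ → ∀ z, ∀ v ∈ U, φ v ≠ ⊤ →
      (⟪z, v⟫ - (φ v).toReal - γ*((1/2)*‖v - uc‖^2)) + γ/2 * ‖v - ustar γ z‖^2 ≤ φs γ z := by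
    intro γ hγ z v hv hfin
    have huU : ustar γ z ∈ U := humem γ hγ z
    have hufin' : φ (ustar γ z) ≠ ⊤ := hufin γ hγ z
    apply aux_eps _ _ _ _ (by positivity)
    intro t ht0 ht1
    have hwU : (1-t) • (ustar γ z) + t • v ∈ U :=
      hUcx huU hv (by linarith) (le_of_lt ht0) (by ring)
    have hφw : φ ((1-t) • (ustar γ z) + t • v)
        ≤ (((1-t)*(φ (ustar γ z)).toReal + t*(φ v).toReal : ℝ) : EReal) := by
      have h := hφcx (ustar γ z) v (1-t) t (by linarith) (le_of_lt ht0) (by ring)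
      rw [hφu γ hγ z, show φ v = (((φ v).toReal : ℝ) : EReal) from
        (EReal.coe_toReal hfin (hφbot v)).symm] at h
      rw [← EReal.coe_mul, ← EReal.coe_mul, ← EReal.coe_add] at h
      exact h
    have hφw_ne : φ ((1-t) • (ustar γ z) + t • v) ≠ ⊤ :=
      ne_top_of_le_ne_top (EReal.coe_ne_top _) hφw
    have hφw_tr : (φ ((1-t) • (ustar γ z) + t • v)).toReal
        ≤ (1-t)*(φ (ustar γ z)).toReal + t*(φ v).toReal :=
      EReal.toReal_le_toReal hφw (hφbot _) (EReal.coe_ne_top _)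
    have key := hA_real γ hγ z _ hwU hφw_ne
    have hiw : ⟪z, (1-t) • (ustar γ z) + t • v⟫ = (1-t)*⟪z, ustar γ z⟫ + t*⟪z, v⟫ := by
      rw [inner_add_right, real_inner_smul_right, real_inner_smul_right]
    have hbw : ‖((1-t) • (ustar γ z) + t • v) - uc‖^2
        = (1-t)*‖ustar γ z - uc‖^2 + t*‖v - uc‖^2 - t*(1-t)*‖v - ustar γ z‖^2 := by
      have hd : ((1-t) • (ustar γ z) + t • v) - uc
          = (1-t) • (ustar γ z - uc) + t • (v - uc) := by module
      rw [hd, aux_combo_norm_sq,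
        show (ustar γ z - uc) - (v - uc) = ustar γ z - v from by abel,
        show ‖ustar γ z - v‖ = ‖v - ustar γ z‖ from norm_sub_rev _ _]
    have hMu : φs γ z = ⟪z, ustar γ z⟫ - (φ (ustar γ z)).toReal
        - γ*((1/2)*‖ustar γ z - uc‖^2) := hφs γ _
    rw [hiw, hbw] at key
    have hcomb : (1-t)*(φs γ z)
        + t*(⟪z, v⟫ - (φ v).toReal - γ*((1/2)*‖v - uc‖^2))
        + γ/2*(t*(1-t))*‖v - ustar γ z‖^2 ≤ φs γ z := by
      rw [hMu]
      linarith [key, hφw_tr]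
    have h2 : t * ((⟪z, v⟫ - (φ v).toReal - γ*((1/2)*‖v - uc‖^2))
        + γ/2 * (1-t) * ‖v - ustar γ z‖^2) ≤ t * (φs γ z) := by linarith [hcomb]
    have h3 := le_of_mul_le_mul_left h2 ht0
    linarith
  -- Lipschitz continuity of the smoothed maximizer
  have hLip : ∀ γ, 0 < γ → ∀ z1 z2, ‖ustar γ z1 - ustar γ z2‖ ≤ ‖z1 - z2‖/γ := by
    intro γ hγ z1 z2
    have h1 := hStrong γ hγ z1 (ustar γ z2) (humem γ hγ z2) (hufin γ hγ z2)
    have h2 := hStrong γ hγ z2 (ustar γ z1) (humem γ hγ z1) (hufin γ hγ z1)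
    rw [hφs] at h1 h2
    have hn12 : ‖ustar γ z2 - ustar γ z1‖ = ‖ustar γ z1 - ustar γ z2‖ := norm_sub_rev _ _
    rw [hn12] at h1
    have hexp : ⟪z1 - z2, ustar γ z1 - ustar γ z2⟫
        = ⟪z1, ustar γ z1⟫ - ⟪z1, ustar γ z2⟫ - ⟪z2, ustar γ z1⟫ + ⟪z2, ustar γ z2⟫ := by
      rw [inner_sub_left, inner_sub_right, inner_sub_right]; ring
    have hmono : γ*‖ustar γ z1 - ustar γ z2‖^2 ≤ ⟪z1 - z2, ustar γ z1 - ustar γ z2⟫ := by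
      rw [hexp]; linarith
    have hcs : ⟪z1 - z2, ustar γ z1 - ustar γ z2⟫ ≤ ‖z1 - z2‖*‖ustar γ z1 - ustar γ z2‖ :=
      real_inner_le_norm _ _
    rcases eq_or_lt_of_le (norm_nonneg (ustar γ z1 - ustar γ z2)) with h0 | h0
    · rw [← h0]; positivity
    · rw [le_div_iff₀ hγ]
      nlinarith [hmono, hcs, h0]
  -- first-order lower bound (subgradient inequality)
  have hgl : ∀ γ, 0 < γ → ∀ xx yy : EuclideanSpace ℝ (Fin p),
      φs γ (AT xx) + ⟪A (ustar γ (AT xx)), yy - xx⟫ ≤ φs γ (AT yy) := by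
    intro γ hγ xx yy
    have h := hA_real γ hγ (AT yy) (ustar γ (AT xx)) (humem γ hγ _) (hufin γ hγ _)
    have hiy : ⟪AT yy, ustar γ (AT xx)⟫
        = ⟪AT xx, ustar γ (AT xx)⟫ + ⟪A (ustar γ (AT xx)), yy - xx⟫ := by
      have e1 : ⟪A (ustar γ (AT xx)), yy - xx⟫ = ⟪yy - xx, A (ustar γ (AT xx))⟫ :=
        real_inner_comm _ _
      rw [e1, ← hadj_inner, map_sub, inner_sub_left]
      ring
    rw [hiy] at h
    rw [hφs γ (AT xx)]
    linarith
  -- descent lemma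
  have hdesc : ∀ γ, 0 < γ → ∀ xx d : EuclideanSpace ℝ (Fin p),
      φs γ (AT (xx + d))
        ≤ φs γ (AT xx) + ⟪A (ustar γ (AT xx)), d⟫ + ‖A‖^2/(2*γ)*‖d‖^2 := by
    intro γ hγ xx d
    have hATn : ‖AT‖ = ‖A‖ := by
      rw [hAT]; exact LinearIsometryEquiv.norm_map ContinuousLinearMap.adjoint A
    have hlip : ∀ x' y' : EuclideanSpace ℝ (Fin p),
        ‖A (ustar γ (AT x')) - A (ustar γ (AT y'))‖ ≤ (‖A‖^2/γ) * ‖x' - y'‖ := by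
      intro x' y'
      have h1 : ‖A (ustar γ (AT x')) - A (ustar γ (AT y'))‖
          = ‖A (ustar γ (AT x') - ustar γ (AT y'))‖ := by rw [map_sub]
      have h2 : ‖A (ustar γ (AT x') - ustar γ (AT y'))‖
          ≤ ‖A‖ * ‖ustar γ (AT x') - ustar γ (AT y')‖ := A.le_opNorm _
      have h3 := hLip γ hγ (AT x') (AT y')
      have h4 : ‖AT x' - AT y'‖ ≤ ‖A‖ * ‖x' - y'‖ := by
        have h5 : ‖AT (x' - y')‖ ≤ ‖AT‖ * ‖x' - y'‖ := AT.le_opNorm _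
        rw [map_sub, hATn] at h5; exact h5
      have h8 := mul_le_mul_of_nonneg_left h3 (norm_nonneg A)
      have h9 := mul_le_mul_of_nonneg_left h4 (by positivity : (0:ℝ) ≤ ‖A‖/γ)
      have h10 : ‖A‖ * (‖AT x' - AT y'‖/γ) = ‖A‖/γ * ‖AT x' - AT y'‖ := by ring
      have h11 : ‖A‖/γ * (‖A‖ * ‖x' - y'‖) = ‖A‖^2/γ * ‖x' - y'‖ := by ring
      linarith [h1.le, h1.ge, h2, h8, h9]
    have h := aux_descent (fun w => φs γ (AT w)) (fun w => A (ustar γ (AT w)))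
      (‖A‖^2/γ) (by positivity) (fun x' y' => hgl γ hγ x' y') hlip xx d
    have he : ‖A‖^2/γ/2*‖d‖^2 = ‖A‖^2/(2*γ)*‖d‖^2 := by ring
    rw [he] at h
    exact h
  -- g-side real facts
  have hg_coe : ∀ y, g y ≠ ⊤ → g y = (((g y).toReal : ℝ) : EReal) :=
    fun y hy => (EReal.coe_toReal hy (hgbot y)).symm
  have hgne_prox : ∀ β, 0 < β → ∀ s, g (prox β s) ≠ ⊤ := by
    intro β hβ s
    obtain ⟨y0, hy0⟩ := hgdom
    have h := hprox β hβ s y0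
    intro htop
    rw [htop, EReal.top_add_of_ne_bot (EReal.coe_ne_bot _)] at h
    exact (EReal.add_lt_top hy0 (EReal.coe_ne_top _)).not_ge h
  have hprox_real : ∀ β, 0 < β → ∀ s y, g y ≠ ⊤ →
      (g (prox β s)).toReal + (2*β)⁻¹*‖prox β s - s‖^2
        ≤ (g y).toReal + (2*β)⁻¹*‖y - s‖^2 := by
    intro β hβ s y hy
    have h := hprox β hβ s y
    rw [hg_coe _ (hgne_prox β hβ s), hg_coe _ hy, ← EReal.coe_add, ← EReal.coe_add] at h
    exact EReal.coe_le_coe_iff.mp h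
  have hgcomb : ∀ (y1 y2 : EuclideanSpace ℝ (Fin p)) (a c : ℝ), 0 ≤ a → 0 ≤ c → a + c = 1 →
      g y1 ≠ ⊤ → g y2 ≠ ⊤ → g (a•y1 + c•y2) ≠ ⊤ ∧
        (g (a•y1 + c•y2)).toReal ≤ a*(g y1).toReal + c*(g y2).toReal := by
    intro y1 y2 a c ha hc hac h1 h2
    have h := hgcx y1 y2 a c ha hc hac
    rw [hg_coe _ h1, hg_coe _ h2, ← EReal.coe_mul, ← EReal.coe_mul, ← EReal.coe_add] at h
    exact ⟨ne_top_of_le_ne_top (EReal.coe_ne_top _) h,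
      EReal.toReal_le_toReal h (hgbot _) (EReal.coe_ne_top _)⟩
  -- prox three point inequality
  have hprox3 : ∀ β, 0 < β → ∀ s y, g y ≠ ⊤ →
      ((g (prox β s)).toReal + (2*β)⁻¹*‖prox β s - s‖^2) + (2*β)⁻¹*‖y - prox β s‖^2
        ≤ (g y).toReal + (2*β)⁻¹*‖y - s‖^2 := by
    intro β hβ s y hy
    apply aux_eps _ _ _ _ (by positivity)
    intro t ht0 ht1
    obtain ⟨hwne, hwle⟩ := hgcomb (prox β s) y (1-t) t (by linarith) ht0.le (by ring)
      (hgne_prox β hβ s) hy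
    have h := hprox_real β hβ s ((1-t)•(prox β s) + t•y) hwne
    have hns : ((1-t)•(prox β s) + t•y) - s = (1-t)•(prox β s - s) + t•(y - s) := by module
    have hnrm : ‖((1-t)•(prox β s) + t•y) - s‖^2
        = (1-t)*‖prox β s - s‖^2 + t*‖y - s‖^2 - t*(1-t)*‖y - prox β s‖^2 := by
      rw [hns, aux_combo_norm_sq, show (prox β s - s) - (y - s) = prox β s - y from by abel,
        show ‖prox β s - y‖ = ‖y - prox β s‖ from norm_sub_rev _ _]
    rw [hnrm] at h
    have h2 : t * (((g (prox β s)).toReal + (2*β)⁻¹*‖prox β s - s‖^2)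
        + (2*β)⁻¹*(1-t)*‖y - prox β s‖^2) ≤ t * ((g y).toReal + (2*β)⁻¹*‖y - s‖^2) := by
      linarith [h, hwle]
    have h3 := le_of_mul_le_mul_left h2 ht0
    linarith
  -- f-side facts
  have hcoe_sub : ∀ (xx : EuclideanSpace ℝ (Fin p)) (v : EuclideanSpace ℝ (Fin n)), φ v ≠ ⊤ →
      (⟪xx, A v⟫ : EReal) - φ v = ((⟪AT xx, v⟫ - (φ v).toReal : ℝ) : EReal) := by
    intro xx v hfin
    rw [show φ v = (((φ v).toReal : ℝ) : EReal) from (EReal.coe_toReal hfin (hφbot v)).symm,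
      ← EReal.coe_sub]
    congr 1
    rw [hadj_inner xx v, EReal.toReal_coe]
  have hf_ge : ∀ xx, ∀ v ∈ U, φ v ≠ ⊤ →
      ((⟪AT xx, v⟫ - (φ v).toReal : ℝ) : EReal) ≤ f xx := by
    intro xx v hv hfin
    rw [hf, ← hcoe_sub xx v hfin]
    exact le_iSup₂ (f := fun v (_ : v ∈ U) => (⟪xx, A v⟫ : EReal) - φ v) v hv
  have hf_le : ∀ γ, 0 < γ → ∀ xx, f xx ≤ ((φs γ (AT xx) + γ*DU : ℝ) : EReal) := by
    intro γ hγ xx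
    rw [hf]
    apply iSup₂_le
    intro v hv
    by_cases hfin : φ v = ⊤
    · rw [hfin, EReal.sub_top]; exact bot_le
    · rw [hcoe_sub xx v hfin]
      apply EReal.coe_le_coe_iff.mpr
      have h1 := hA_real γ hγ (AT xx) v hv hfin
      have h3 : γ*((1/2)*‖v - uc‖^2) ≤ γ*DU :=
        mul_le_mul_of_nonneg_left (hbD v hv hfin) hγ.le
      linarith
  have hfx_bot : ∀ xx, f xx ≠ ⊥ := by
    intro xx heq
    have h := hf_ge xx v0 hv0U hv0fin
    rw [heq] at h
    exact (EReal.coe_ne_bot _) (le_bot_iff.mp h)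
  have hfxs_top : f xs ≠ ⊤ := by
    intro heq
    rw [heq, EReal.top_add_of_ne_bot (hgbot xs)] at hFs
    exact (EReal.coe_ne_top Fs) hFs.symm
  have hgxs_top : g xs ≠ ⊤ := by
    intro heq
    rw [heq, EReal.add_top_of_ne_bot (hfx_bot xs)] at hFs
    exact (EReal.coe_ne_top Fs) hFs.symm
  have hsum_xs : (f xs).toReal + (g xs).toReal = Fs := by
    have h : (((f xs).toReal + (g xs).toReal : ℝ) : EReal) = ((Fs:ℝ) : EReal) := by
      rw [EReal.coe_add, EReal.coe_toReal hfxs_top (hfx_bot xs),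
        EReal.coe_toReal hgxs_top (hgbot xs)]
      exact hFs
    exact_mod_cast h
  have hγpos : ∀ k : ℕ, 0 < γs (k+1) := by intro k; rw [hγs]; positivity
  have hβpos : ∀ k : ℕ, 0 < γs (k+1)/‖A‖^2 := fun k => div_pos (hγpos k) hL
  have hgx_top : ∀ k, g (x k) ≠ ⊤ := by
    intro k
    cases k with
    | zero =>
      intro heq
      exact hx0dom (by rw [heq, EReal.add_top_of_ne_bot (hfx_bot _)])
    | succ k =>
      rw [hxrec k]
      exact hgne_prox _ (hβpos k) _
  have hτpos : ∀ k : ℕ, 0 < τ k := by intro k; rw [hτ]; positivity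
  have hτle1 : ∀ k : ℕ, τ k ≤ 1 := by
    intro k; rw [hτ, div_le_one (by positivity)]
    have h : (0:ℝ) ≤ (k:ℝ) := by positivity
    linarith
  have hτne : ∀ k : ℕ, τ k ≠ 0 := fun k => ne_of_gt (hτpos k)
  -- per-step inequality
  have step : ∀ k : ℕ, ∀ Pk : ℝ,
      (φs (γs (k+1)) (AT (xh k))
        + ⟪A (ustar (γs (k+1)) (AT (xh k))), ((1 - τ k) • x k + τ k • xs) - xh k⟫
        ≤ (1 - τ k)*Pk + τ k * (f xs).toReal) →
      ((k:ℝ)+1) * (φs (γs (k+1)) (AT (x (k+1))) + (g (x (k+1))).toReal - Fs)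
          + (‖A‖^2/(2*γ1)) * ‖xt (k+1) - xs‖^2
        ≤ (k:ℝ) * (Pk + (g (x k)).toReal - Fs) + (‖A‖^2/(2*γ1)) * ‖xt k - xs‖^2 := by
    intro k Pk hPk
    have hxp := hxrec k
    set γ' := γs (k+1) with hγ'
    have hγ'pos : 0 < γ' := hγpos k
    set β := γ'/‖A‖^2 with hβ
    have hβp : 0 < β := hβpos k
    set sp := xh k - β • A (ustar γ' (AT (xh k))) with hsp
    set y := (1 - τ k) • x k + τ k • xs with hy
    -- E1: descent
    have e1 : φs γ' (AT (x (k+1)))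
        ≤ φs γ' (AT (xh k)) + ⟪A (ustar γ' (AT (xh k))), x (k+1) - xh k⟫
          + ‖A‖^2/(2*γ')*‖x (k+1) - xh k‖^2 := by
      have h := hdesc γ' hγ'pos (xh k) (x (k+1) - xh k)
      rw [show xh k + (x (k+1) - xh k) = x (k+1) from by abel] at h
      exact h
    have hc'eq : ‖A‖^2/(2*γ') = (2*β)⁻¹ := by
      rw [hβ]
      rw [show 2*(γ'/‖A‖^2) = (2*γ')/‖A‖^2 from by ring, inv_div]
    rw [hc'eq] at e1
    -- E2: prox three-point, expanded
    have hgycomb := hgcomb (x k) xs (1 - τ k) (τ k) (by linarith [hτle1 k]) (hτpos k).le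
      (by ring) (hgx_top k) hgxs_top
    have e2 := hprox3 β hβp sp y hgycomb.1
    rw [← hxp] at e2
    have hsq : ∀ w : EuclideanSpace ℝ (Fin p),
        ‖w - sp‖^2 = ‖w - xh k‖^2 + 2*β*⟪A (ustar γ' (AT (xh k))), w - xh k⟫
          + β^2*‖A (ustar γ' (AT (xh k)))‖^2 := by
      intro w
      have hws : w - sp = (w - xh k) + β • A (ustar γ' (AT (xh k))) := by
        rw [hsp]; abel
      have h1 : ⟪w - xh k, β • A (ustar γ' (AT (xh k)))⟫
          = β * ⟪A (ustar γ' (AT (xh k))), w - xh k⟫ := by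
        rw [real_inner_smul_right, real_inner_comm]
      have h2 : ‖β • A (ustar γ' (AT (xh k)))‖^2 = β^2*‖A (ustar γ' (AT (xh k)))‖^2 := by
        rw [norm_smul, Real.norm_eq_abs, mul_pow, sq_abs]
      rw [hws, norm_add_sq_real, h1, h2]; ring
    have hdist : ∀ r1 r2 r3 : ℝ, (2*β)⁻¹*(r1 + 2*β*r2 + β^2*r3)
        = (2*β)⁻¹*r1 + r2 + β/2*r3 := by
      intro r1 r2 r3
      have hβne : β ≠ 0 := ne_of_gt hβp
      field_simp
    rw [hsq (x (k+1)), hsq y, hdist, hdist] at e2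
    -- geometry
    have hgeo1 : y - xh k = τ k • (xs - xt k) := by rw [hy, hxh k]; module
    have hττ : τ k * (τ k)⁻¹ = 1 := mul_inv_cancel₀ (hτne k)
    have hgeo2 : y - x (k+1) = τ k • (xs - xt (k+1)) := by
      rw [hxtrec k, smul_sub, smul_sub, smul_smul, hττ, one_smul, hy, hxh k]
      module
    have hn1 : ‖y - xh k‖^2 = (τ k)^2 * ‖xt k - xs‖^2 := by
      rw [hgeo1, norm_smul, Real.norm_eq_abs, mul_pow, sq_abs,
        show ‖xs - xt k‖ = ‖xt k - xs‖ from norm_sub_rev _ _]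
    have hn2 : ‖y - x (k+1)‖^2 = (τ k)^2 * ‖xt (k+1) - xs‖^2 := by
      rw [hgeo2, norm_smul, Real.norm_eq_abs, mul_pow, sq_abs,
        show ‖xs - xt (k+1)‖ = ‖xt (k+1) - xs‖ from norm_sub_rev _ _]
    rw [hn1, hn2] at e2
    -- combine
    have hτs : τ k * (f xs).toReal + τ k * (g xs).toReal = τ k * Fs := by
      rw [← mul_add, hsum_xs]
    have P : (φs γ' (AT (x (k+1))) + (g (x (k+1))).toReal - Fs)
        + (2*β)⁻¹*((τ k)^2 * ‖xt (k+1) - xs‖^2)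
        ≤ (1 - τ k)*(Pk + (g (x k)).toReal - Fs)
          + (2*β)⁻¹*((τ k)^2 * ‖xt k - xs‖^2) := by
      linarith [e1, e2, hgycomb.2, hPk, hτs]
    have hkk : ((k:ℝ)+1) ≠ 0 := by positivity
    have hAne : ‖A‖ ≠ 0 := ne_of_gt hAnorm
    have hγ1ne : γ1 ≠ 0 := ne_of_gt hγ1
    have hτk : τ k = 1/((k:ℝ)+1) := hτ k
    have hγ'k : γ' = γ1/((k:ℝ)+1) := hγs k
    have hA1 : ((k:ℝ)+1)*(1 - τ k) = (k:ℝ) := by rw [hτk]; field_simp; ring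
    have hA2 : ((k:ℝ)+1)*((2*β)⁻¹*(τ k)^2) = ‖A‖^2/(2*γ1) := by
      rw [hτk, hβ, hγ'k]
      field_simp
    calc ((k:ℝ)+1) * (φs γ' (AT (x (k+1))) + (g (x (k+1))).toReal - Fs)
          + (‖A‖^2/(2*γ1)) * ‖xt (k+1) - xs‖^2
        = ((k:ℝ)+1) * ((φs γ' (AT (x (k+1))) + (g (x (k+1))).toReal - Fs)
          + (2*β)⁻¹*((τ k)^2 * ‖xt (k+1) - xs‖^2)) := by
          linear_combination (-(‖xt (k+1) - xs‖^2)) * hA2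
      _ ≤ ((k:ℝ)+1) * ((1 - τ k)*(Pk + (g (x k)).toReal - Fs)
          + (2*β)⁻¹*((τ k)^2 * ‖xt k - xs‖^2)) :=
          mul_le_mul_of_nonneg_left P (by positivity)
      _ = (k:ℝ) * (Pk + (g (x k)).toReal - Fs) + (‖A‖^2/(2*γ1)) * ‖xt k - xs‖^2 := by
          linear_combination (Pk + (g (x k)).toReal - Fs) * hA1 + (‖xt k - xs‖^2) * hA2
  -- E4b : optimality at xs
  have e4b : ∀ k : ℕ, φs (γs (k+1)) (AT (xh k))
      + ⟪A (ustar (γs (k+1)) (AT (xh k))), xs - xh k⟫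
      + γs (k+1)*((1/2)*‖ustar (γs (k+1)) (AT (xh k)) - uc‖^2) ≤ (f xs).toReal := by
    intro k
    have h := hf_ge xs (ustar (γs (k+1)) (AT (xh k))) (humem _ (hγpos k) _) (hufin _ (hγpos k) _)
    rw [show f xs = (((f xs).toReal : ℝ) : EReal) from
      (EReal.coe_toReal hfxs_top (hfx_bot xs)).symm] at h
    have h' := EReal.coe_le_coe_iff.mp h
    have hi : ⟪A (ustar (γs (k+1)) (AT (xh k))), xs - xh k⟫
        = ⟪AT xs, ustar (γs (k+1)) (AT (xh k))⟫
          - ⟪AT (xh k), ustar (γs (k+1)) (AT (xh k))⟫ := by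
      rw [real_inner_comm, ← hadj_inner, map_sub, inner_sub_left]
    rw [hφs, hi]
    linarith
  -- E4a : comparison between consecutive smoothing parameters
  have e4a : ∀ k : ℕ, φs (γs (k+2)) (AT (xh (k+1)))
      + ⟪A (ustar (γs (k+2)) (AT (xh (k+1)))), x (k+1) - xh (k+1)⟫
      ≤ φs (γs (k+1)) (AT (x (k+1)))
        + (γs (k+1) - γs (k+2))*((1/2)*‖ustar (γs (k+2)) (AT (xh (k+1))) - uc‖^2) := by
    intro k
    have h := hA_real (γs (k+1)) (hγpos k) (AT (x (k+1)))
      (ustar (γs (k+2)) (AT (xh (k+1)))) (humem _ (hγpos (k+1)) _) (hufin _ (hγpos (k+1)) _)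
    have hi : ⟪A (ustar (γs (k+2)) (AT (xh (k+1)))), x (k+1) - xh (k+1)⟫
        = ⟪AT (x (k+1)), ustar (γs (k+2)) (AT (xh (k+1)))⟫
          - ⟪AT (xh (k+1)), ustar (γs (k+2)) (AT (xh (k+1)))⟫ := by
      rw [real_inner_comm, ← hadj_inner, map_sub, inner_sub_left]
    rw [hφs (γs (k+2)), hi]
    linarith
  -- combined E4 hypothesis for k ≥ 1
  have hPkS : ∀ k : ℕ, φs (γs (k+2)) (AT (xh (k+1)))
      + ⟪A (ustar (γs (k+2)) (AT (xh (k+1)))),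
          ((1 - τ (k+1)) • x (k+1) + τ (k+1) • xs) - xh (k+1)⟫
      ≤ (1 - τ (k+1))*(φs (γs (k+1)) (AT (x (k+1)))) + τ (k+1) * (f xs).toReal := by
    intro k
    have ha := e4a k
    have hb := e4b (k+1)
    have hτ1 : 0 ≤ 1 - τ (k+1) := by linarith [hτle1 (k+1)]
    have hτ0 : 0 ≤ τ (k+1) := (hτpos (k+1)).le
    have hdec : ((1 - τ (k+1)) • x (k+1) + τ (k+1) • xs) - xh (k+1)
        = (1 - τ (k+1)) • (x (k+1) - xh (k+1)) + τ (k+1) • (xs - xh (k+1)) := by module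
    have hidec : ⟪A (ustar (γs (k+2)) (AT (xh (k+1)))),
          ((1 - τ (k+1)) • x (k+1) + τ (k+1) • xs) - xh (k+1)⟫
        = (1 - τ (k+1))*⟪A (ustar (γs (k+2)) (AT (xh (k+1)))), x (k+1) - xh (k+1)⟫
          + τ (k+1)*⟪A (ustar (γs (k+2)) (AT (xh (k+1)))), xs - xh (k+1)⟫ := by
      rw [hdec, inner_add_right, real_inner_smul_right, real_inner_smul_right]
    have hm1 := mul_le_mul_of_nonneg_left ha hτ1
    have hm2 := mul_le_mul_of_nonneg_left hb hτ0
    have hcanc : (1 - τ (k+1))*((γs (k+1) - γs (k+2))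
          *((1/2)*‖ustar (γs (k+2)) (AT (xh (k+1))) - uc‖^2))
        = τ (k+1)*(γs (k+2)*((1/2)*‖ustar (γs (k+2)) (AT (xh (k+1))) - uc‖^2)) := by
      have hcoefeq : (1 - τ (k+1))*(γs (k+1) - γs (k+2)) = τ (k+1)*(γs (k+2)) := by
        rw [hτ, hγs, hγs]
        push_cast
        have hk1 : ((k:ℝ)+1) ≠ 0 := by positivity
        have hk2 : ((k:ℝ)+1+1) ≠ 0 := by positivity
        field_simp
        ring
      linear_combination ((1/2)*‖ustar (γs (k+2)) (AT (xh (k+1))) - uc‖^2) * hcoefeq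
    rw [hidec]
    linarith [hm1, hm2, hcanc]
  -- E4 hypothesis at k = 0
  have hPk0 : φs (γs 1) (AT (xh 0))
      + ⟪A (ustar (γs 1) (AT (xh 0))), ((1 - τ 0) • x 0 + τ 0 • xs) - xh 0⟫
      ≤ (1 - τ 0)*(0:ℝ) + τ 0 * (f xs).toReal := by
    have hb := e4b 0
    have hτ0 : τ 0 = 1 := by rw [hτ]; norm_num
    have hbu : 0 ≤ γs 1*((1/2)*‖ustar (γs 1) (AT (xh 0)) - uc‖^2) :=
      mul_nonneg (hγpos 0).le (by positivity)
    have hy0 : ((1 - τ 0) • x 0 + τ 0 • xs) - xh 0 = xs - xh 0 := by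
      rw [hτ0]; module
    rw [hy0, hτ0]
    linarith [hb, hbu]
  -- telescoping
  have tele : ∀ k : ℕ, 1 ≤ k →
      (k:ℝ) * (φs (γs k) (AT (x k)) + (g (x k)).toReal - Fs)
          + (‖A‖^2/(2*γ1)) * ‖xt k - xs‖^2
        ≤ (‖A‖^2/(2*γ1)) * ‖xt 0 - xs‖^2 := by
    intro k hk
    induction k with
    | zero => omega
    | succ k ih =>
      cases Nat.eq_zero_or_pos k with
      | inl h0 =>
        subst h0
        have hs := step 0 0 hPk0
        push_cast at hs ⊢
        linarith [hs]
      | inr hpos =>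
        obtain ⟨j, rfl⟩ : ∃ j, k = j+1 := ⟨k-1, by omega⟩
        have hs := step (j+1) (φs (γs (j+1)) (AT (x (j+1)))) (hPkS j)
        have ih' := ih (by omega)
        push_cast at hs ⊢
        push_cast at ih'
        linarith [hs, ih']
  -- final bound, part 1
  have final1 : ∀ k : ℕ, 1 ≤ k → (f (x k) + g (x k)) - (Fs : EReal)
      ≤ ((‖A‖^2 * ‖x 0 - xs‖^2 / (2*γ1*(k:ℝ)) + 3*γ1*DU/(k:ℝ) : ℝ) : EReal) := by
    intro k hk
    obtain ⟨j, rfl⟩ : ∃ j, k = j+1 := ⟨k-1, by omega⟩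
    have hkR : (0:ℝ) < ((j:ℝ)+1) := by positivity
    have hγk : γs (j+1) = γ1/((j:ℝ)+1) := hγs j
    have htele := tele (j+1) (by omega)
    push_cast at htele
    have hfb := hf_le (γs (j+1)) (hγpos j) (x (j+1))
    have hgb : g (x (j+1)) = (((g (x (j+1))).toReal : ℝ) : EReal) := hg_coe _ (hgx_top (j+1))
    have hsum : f (x (j+1)) + g (x (j+1))
        ≤ ((φs (γs (j+1)) (AT (x (j+1))) + γs (j+1)*DU + (g (x (j+1))).toReal : ℝ) : EReal) := by
      calc f (x (j+1)) + g (x (j+1))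
          ≤ ((φs (γs (j+1)) (AT (x (j+1))) + γs (j+1)*DU : ℝ) : EReal)
            + (((g (x (j+1))).toReal : ℝ) : EReal) := add_le_add hfb (le_of_eq hgb)
        _ = ((φs (γs (j+1)) (AT (x (j+1))) + γs (j+1)*DU + (g (x (j+1))).toReal : ℝ) : EReal) := by
            rw [← EReal.coe_add]
    have hreal : φs (γs (j+1)) (AT (x (j+1))) + γs (j+1)*DU + (g (x (j+1))).toReal
        ≤ Fs + (‖A‖^2 * ‖x 0 - xs‖^2 / (2*γ1*((j:ℝ)+1)) + 3*γ1*DU/((j:ℝ)+1)) := by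
      have hR0 : ‖xt 0 - xs‖^2 = ‖x 0 - xs‖^2 := by rw [hxt0]
      have hRk : 0 ≤ (‖A‖^2/(2*γ1)) * ‖xt (j+1) - xs‖^2 := by positivity
      have h1 : ((j:ℝ)+1)*(φs (γs (j+1)) (AT (x (j+1))) + (g (x (j+1))).toReal - Fs)
          ≤ (‖A‖^2/(2*γ1)) * ‖x 0 - xs‖^2 := by
        rw [← hR0]; linarith [htele, hRk]
      have h2 : φs (γs (j+1)) (AT (x (j+1))) + (g (x (j+1))).toReal - Fs
          ≤ (‖A‖^2/(2*γ1)) * ‖x 0 - xs‖^2 / ((j:ℝ)+1) := by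
        rw [le_div_iff₀ hkR]; linarith [h1]
      have h3 : γs (j+1)*DU = γ1*DU/((j:ℝ)+1) := by rw [hγk]; ring
      have h4 : (0:ℝ) ≤ 2*(γ1*DU)/((j:ℝ)+1) := by positivity
      have h5 : 3*γ1*DU/((j:ℝ)+1) = γ1*DU/((j:ℝ)+1) + 2*(γ1*DU)/((j:ℝ)+1) := by ring
      have h6 : (‖A‖^2/(2*γ1)) * ‖x 0 - xs‖^2 / ((j:ℝ)+1)
          = ‖A‖^2 * ‖x 0 - xs‖^2 / (2*γ1*((j:ℝ)+1)) := by
        have hjne : ((j:ℝ)+1) ≠ 0 := ne_of_gt hkR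
        have hγ1ne : γ1 ≠ 0 := ne_of_gt hγ1
        field_simp
      linarith [h2, h3, h4, h5, h6]
    have hcomb : f (x (j+1)) + g (x (j+1))
        ≤ ((Fs + (‖A‖^2 * ‖x 0 - xs‖^2 / (2*γ1*((j:ℝ)+1)) + 3*γ1*DU/((j:ℝ)+1)) : ℝ) : EReal) :=
      le_trans hsum (EReal.coe_le_coe_iff.mpr hreal)
    have h7 := EReal.sub_le_sub hcomb (le_refl (Fs:EReal))
    rw [← EReal.coe_sub,
      show Fs + (‖A‖^2 * ‖x 0 - xs‖^2 / (2*γ1*((j:ℝ)+1)) + 3*γ1*DU/((j:ℝ)+1)) - Fs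
        = ‖A‖^2 * ‖x 0 - xs‖^2 / (2*γ1*((j:ℝ)+1)) + 3*γ1*DU/((j:ℝ)+1) from by ring] at h7
    have hcast : (((j+1:ℕ)):ℝ) = (j:ℝ)+1 := by push_cast; ring
    rw [hcast]
    exact h7
  refine ⟨final1, ?_⟩
  intro hne hDpos hγval k hk
  have h := final1 k hk
  refine le_trans h (le_of_eq ?_)
  have hkR : (0:ℝ) < (k:ℝ) := by
    have : (1:ℝ) ≤ (k:ℝ) := by exact_mod_cast hk
    linarith
  congr 1
  set s := Real.sqrt (6*DU) with hs
  have hspos : 0 < s := Real.sqrt_pos.mpr (by linarith)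
  have hs2 : s^2 = 6*DU := Real.sq_sqrt (by linarith)
  have hdpos : 0 < ‖x 0 - xs‖ := by
    rw [norm_pos_iff]
    exact sub_ne_zero.mpr hne
  have hDU6 : DU = s^2/6 := by linarith
  rw [hγval, hDU6]
  have hsne : s ≠ 0 := ne_of_gt hspos
  have hdne : ‖x 0 - xs‖ ≠ 0 := ne_of_gt hdpos
  have hAne : ‖A‖ ≠ 0 := ne_of_gt hAnorm
  have hkne : (k:ℝ) ≠ 0 := ne_of_gt hkR
  field_simp
  ring
end

section
/- For every k ≥ 0, the averaged primal iterate satisfies ū^k ∈ U, and −‖x*‖·dist(b − Aū^k, K) ≤ φ(ū^k) − φ* ≤ ( ‖A‖²·‖x⁰‖² + 2(γ₁ + 2γ₁²)·D_U )/( γ₁·(k + 1) ). -/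
open scoped RealInnerProductSpace BigOperators

lemma aux_t0 (a b r : ℝ) (h : ∀ t : ℝ, 0 < t → t ≤ 1 → a ≤ b + t * r) : a ≤ b := by
  by_contra hc
  push_neg at hc
  set ε := a - b with hε
  have hεpos : 0 < ε := by linarith
  set t := min 1 (ε / (2 * (|r| + 1))) with ht
  have hrpos : 0 < |r| + 1 := by positivity
  have ht0 : 0 < t := lt_min one_pos (by positivity)
  have ht1 : t ≤ 1 := min_le_left _ _
  have h2 : t * r ≤ t * |r| := by
    have := le_abs_self r
    nlinarith
  have h3 : t * |r| ≤ (ε / (2 * (|r| + 1))) * (|r| + 1) := by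
    have h4 : t ≤ ε / (2 * (|r| + 1)) := min_le_right _ _
    have h5 : (0:ℝ) ≤ |r| := abs_nonneg r
    nlinarith
  have h6 : (ε / (2 * (|r| + 1))) * (|r| + 1) = ε / 2 := by
    field_simp
  have := h t ht0 ht1
  rw [h6] at h3
  linarith

lemma aux_nsq {E : Type*} [NormedAddCommGroup E] [InnerProductSpace ℝ E] (v w : E) (c : ℝ) :
    ‖v + c • w‖^2 = ‖v‖^2 + 2*(c*⟪v,w⟫) + c^2*‖w‖^2 := by
  rw [norm_add_sq_real, real_inner_smul_right, norm_smul]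
  simp [Real.norm_eq_abs, mul_pow, sq_abs]

lemma aux_comb {E : Type*} [NormedAddCommGroup E] [InnerProductSpace ℝ E] (a b : E) (t : ℝ) :
    ‖(1-t) • a + t • b‖^2 = (1-t)*‖a‖^2 + t*‖b‖^2 - t*(1-t)*‖a-b‖^2 := by
  have h1 : (1-t) • a + t • b = a + t • (b - a) := by module
  rw [h1, aux_nsq, inner_sub_right, real_inner_self_eq_norm_sq,
    norm_sub_rev a b, norm_sub_sq_real, real_inner_comm]
  ring

set_option maxHeartbeats 4000000 in
theorem stmt_18
    {n p : ℕ} (hn : 1 ≤ n) (hp : 1 ≤ p)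
    (U : Set (EuclideanSpace ℝ (Fin n)))
    (hUne : U.Nonempty) (hUcl : IsClosed U) (hUcx : Convex ℝ U)
    (φ : EuclideanSpace ℝ (Fin n) → EReal)
    (hφbot : ∀ v, φ v ≠ ⊥)
    (hφlsc : LowerSemicontinuous φ)
    (hφcx : ∀ v w : EuclideanSpace ℝ (Fin n), ∀ a c : ℝ, 0 ≤ a → 0 ≤ c → a + c = 1 →
      φ (a • v + c • w) ≤ (a : EReal) * φ v + (c : EReal) * φ w)
    (hφdom : ∃ v ∈ U, φ v ≠ ⊤)
    (A : EuclideanSpace ℝ (Fin n) →L[ℝ] EuclideanSpace ℝ (Fin p))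
    (hAnorm : 0 < ‖A‖)
    (bvec : EuclideanSpace ℝ (Fin p))
    (K : Set (EuclideanSpace ℝ (Fin p)))
    (hKne : K.Nonempty) (hKcl : IsClosed K) (hKcx : Convex ℝ K)
    (φstar : ℝ) (upr : EuclideanSpace ℝ (Fin n))
    (huprU : upr ∈ U) (huprfeas : A upr - bvec ∈ -K) (huprval : φ upr = (φstar : EReal))
    (hprmin : ∀ v ∈ U, A v - bvec ∈ -K → (φstar : EReal) ≤ φ v)
    (uc : EuclideanSpace ℝ (Fin n)) (hucU : uc ∈ U)
    (DU : ℝ)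
    (hDUbdd : BddAbove ((fun v => (1/2) * ‖v - uc‖^2) '' {v | v ∈ U ∧ φ v ≠ ⊤}))
    (hDU : DU = sSup ((fun v => (1/2) * ‖v - uc‖^2) '' {v | v ∈ U ∧ φ v ≠ ⊤}))
    (ustar : ℝ → EuclideanSpace ℝ (Fin p) → EuclideanSpace ℝ (Fin n))
    (humem : ∀ γ > (0:ℝ), ∀ x, ustar γ x ∈ U)
    (hufin : ∀ γ > (0:ℝ), ∀ x, φ (ustar γ x) ≠ ⊤)
    (humax : ∀ γ > (0:ℝ), ∀ x, ∀ v ∈ U,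
      (⟪x, A v⟫ : EReal) - φ v - ((γ * ((1/2) * ‖v - uc‖^2) : ℝ) : EReal)
        ≤ (⟪x, A (ustar γ x)⟫ : EReal) - φ (ustar γ x)
          - ((γ * ((1/2) * ‖ustar γ x - uc‖^2) : ℝ) : EReal))
    (g : EuclideanSpace ℝ (Fin p) → EReal)
    (hg : ∀ x, g x = (⨆ r ∈ K, (⟪x, r⟫ : EReal)) - ((⟪bvec, x⟫ : ℝ) : EReal))
    (F : EuclideanSpace ℝ (Fin p) → EReal)
    (hF : ∀ x, F x = (⨆ v ∈ U, ((⟪x, A v⟫ : EReal) - φ v)) + g x)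
    (prox : ℝ → EuclideanSpace ℝ (Fin p) → EuclideanSpace ℝ (Fin p))
    (hprox : ∀ β > (0:ℝ), ∀ x y,
      g (prox β x) + (((2*β)⁻¹ * ‖prox β x - x‖^2 : ℝ) : EReal)
        ≤ g y + (((2*β)⁻¹ * ‖y - x‖^2 : ℝ) : EReal))
    (hproxu : ∀ β > (0:ℝ), ∀ x y,
      (∀ w, g y + (((2*β)⁻¹ * ‖y - x‖^2 : ℝ) : EReal)
          ≤ g w + (((2*β)⁻¹ * ‖w - x‖^2 : ℝ) : EReal)) → y = prox β x)
    (γ1 : ℝ) (hγ1 : 0 < γ1)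
    (τ : ℕ → ℝ) (hτ : ∀ k : ℕ, τ k = 1/((k:ℝ) + 1))
    (γs : ℕ → ℝ) (hγs : ∀ k : ℕ, γs (k+1) = γ1 / ((k:ℝ) + 1))
    (x xt xh : ℕ → EuclideanSpace ℝ (Fin p))
    (hxt0 : xt 0 = x 0) (hx0dom : F (x 0) ≠ ⊤)
    (hxh : ∀ k : ℕ, xh k = (1 - τ k) • x k + τ k • xt k)
    (hxrec : ∀ k : ℕ, x (k+1)
        = prox (γs (k+1)/‖A‖^2) (xh k - (γs (k+1)/‖A‖^2) • A (ustar (γs (k+1)) (xh k))))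
    (hxtrec : ∀ k : ℕ, xt (k+1) = xt k - (τ k)⁻¹ • (xh k - x (k+1)))
    (ubar : ℕ → EuclideanSpace ℝ (Fin n))
    (hubar : ∀ k : ℕ, ubar k = (γ1 * ((k:ℝ) + 1))⁻¹ •
        ∑ i ∈ Finset.range (k+1), (γs (i+1) / τ i) • ustar (γs (i+1)) (xh i))
    (xs : EuclideanSpace ℝ (Fin p))
    (hxsmin : ∀ y, F xs ≤ F y) (hFs : F xs = ((-φstar : ℝ) : EReal))
    (hsaddle : ∀ v ∈ U, ∀ r ∈ K,
      ((φstar + ⟪xs, A v - bvec + r⟫ : ℝ) : EReal) ≤ φ v)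
    :
    ∀ k : ℕ,
      ubar k ∈ U ∧
      ((-(‖xs‖ * Metric.infDist (bvec - A (ubar k)) K) : ℝ) : EReal)
          ≤ φ (ubar k) - (φstar : EReal) ∧
      φ (ubar k) - (φstar : EReal)
          ≤ (((‖A‖^2 * ‖x 0‖^2 + 2*(γ1 + 2*γ1^2)*DU) / (γ1 * ((k:ℝ) + 1)) : ℝ) : EReal) := by
  -- abbreviations
  set bU : EuclideanSpace ℝ (Fin n) → ℝ := fun v => (1/2) * ‖v - uc‖^2 with hbUdef
  set φR : EuclideanSpace ℝ (Fin n) → ℝ := fun v => (φ v).toReal with hφRdef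
  set fγ : ℝ → EuclideanSpace ℝ (Fin p) → ℝ :=
    fun γ y => ⟪y, A (ustar γ y)⟫ - φR (ustar γ y) - γ * bU (ustar γ y) with hfγdef
  set gR : EuclideanSpace ℝ (Fin p) → ℝ := fun y => (g y).toReal with hgRdef
  clear_value bU φR fγ gR
  -- basic facts
  have hbU0 : ∀ v, 0 ≤ bU v := by
    intro v; rw [hbUdef]; positivity
  have hbUD : ∀ v, v ∈ U → φ v ≠ ⊤ → bU v ≤ DU := by
    intro v hv hvt
    rw [hDU]
    exact le_csSup hDUbdd ⟨v, ⟨hv, hvt⟩, rfl⟩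
  have hDU0 : 0 ≤ DU := by
    obtain ⟨v, hv, hvt⟩ := hφdom
    exact le_trans (hbU0 v) (hbUD v hv hvt)
  have hφcoe : ∀ v, φ v ≠ ⊤ → φ v = ((φR v : ℝ) : EReal) := by
    intro v hv; rw [hφRdef]; exact (EReal.coe_toReal hv (hφbot v)).symm
  have humaxR : ∀ γ, 0 < γ → ∀ y, ∀ v ∈ U, φ v ≠ ⊤ →
      ⟪y, A v⟫ - φR v - γ * bU v ≤ fγ γ y := by
    intro γ hγ y v hv hvt
    have h := humax γ hγ y v hv
    rw [hφcoe v hvt, hφcoe _ (hufin γ hγ y), ← EReal.coe_sub, ← EReal.coe_sub,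
      ← EReal.coe_sub, ← EReal.coe_sub, EReal.coe_le_coe_iff] at h
    simp only [hfγdef, hbUdef, hφRdef] at h ⊢
    exact h
  have hstrong : ∀ γ, 0 < γ → ∀ y, ∀ v ∈ U, φ v ≠ ⊤ →
      ⟪y, A v⟫ - φR v - γ * bU v + γ/2 * ‖v - ustar γ y‖^2 ≤ fγ γ y := by
    intro γ hγ y v hv hvt
    have hu0U : ustar γ y ∈ U := humem γ hγ y
    have hu0t : φ (ustar γ y) ≠ ⊤ := hufin γ hγ y
    have hd : ‖v - ustar γ y‖^2 = ‖ustar γ y - v‖^2 := by rw [norm_sub_rev]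
    rw [hd]
    have goal2 : ∀ t : ℝ, 0 < t → t ≤ 1 →
        ⟪y, A v⟫ - φR v - γ * bU v + γ/2 * ‖ustar γ y - v‖^2
          ≤ fγ γ y + t * (γ/2 * ‖ustar γ y - v‖^2) := by
      intro t ht0 ht1
      have hmemt : (1-t) • ustar γ y + t • v ∈ U :=
        hUcx hu0U hv (by linarith) (le_of_lt ht0) (by ring)
      have hφt : φ ((1-t) • ustar γ y + t • v)
          ≤ (((1-t) * φR (ustar γ y) + t * φR v : ℝ) : EReal) := by
        have h := hφcx (ustar γ y) v (1-t) t (by linarith) (le_of_lt ht0) (by ring)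
        rw [hφcoe _ hu0t, hφcoe v hvt, ← EReal.coe_mul, ← EReal.coe_mul, ← EReal.coe_add] at h
        exact h
      have hφtt : φ ((1-t) • ustar γ y + t • v) ≠ ⊤ :=
        ne_top_of_le_ne_top (EReal.coe_ne_top _) hφt
      have hφtR : φR ((1-t) • ustar γ y + t • v) ≤ (1-t) * φR (ustar γ y) + t * φR v := by
        have h := EReal.toReal_le_toReal hφt (hφbot _) (EReal.coe_ne_top _)
        rw [EReal.toReal_coe] at h
        have e : φR ((1-t) • ustar γ y + t • v) = (φ ((1-t) • ustar γ y + t • v)).toReal := by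
          rw [hφRdef]
        rw [e]
        exact h
      have hmax := humaxR γ hγ y _ hmemt hφtt
      have hbt : bU ((1-t) • ustar γ y + t • v)
          = (1-t) * bU (ustar γ y) + t * bU v - t*(1-t)/2 * ‖ustar γ y - v‖^2 := by
        simp only [hbUdef]
        have h1 : (1-t) • ustar γ y + t • v - uc = (1-t) • (ustar γ y - uc) + t • (v - uc) := by
          module
        rw [h1, aux_comb]
        have h2 : ustar γ y - uc - (v - uc) = ustar γ y - v := by abel
        rw [h2]; ring
      have hinner : ⟪y, A ((1-t) • ustar γ y + t • v)⟫
          = (1-t) * ⟪y, A (ustar γ y)⟫ + t * ⟪y, A v⟫ := by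
        rw [map_add, map_smul, map_smul, inner_add_right,
          real_inner_smul_right, real_inner_smul_right]
      have hfval : fγ γ y = ⟪y, A (ustar γ y)⟫ - φR (ustar γ y) - γ * bU (ustar γ y) := by
        simp only [hfγdef]
      rw [hinner, hbt] at hmax
      have hkey : t * (⟪y, A v⟫ - φR v - γ * bU v + γ/2 * ‖ustar γ y - v‖^2)
          ≤ t * (fγ γ y + t * (γ/2 * ‖ustar γ y - v‖^2)) := by
        nlinarith [hmax, hφtR, hfval]
      exact (mul_le_mul_iff_right₀ ht0).mp hkey
    exact aux_t0 _ _ _ goal2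
  have hlip : ∀ γ, 0 < γ → ∀ y z,
      fγ γ z ≤ fγ γ y + ⟪A (ustar γ y), z - y⟫ + ‖A‖^2/(2*γ) * ‖z - y‖^2 := by
    intro γ hγ y z
    have h1 := hstrong γ hγ y (ustar γ z) (humem γ hγ z) (hufin γ hγ z)
    have hfz : fγ γ z = ⟪z, A (ustar γ z)⟫ - φR (ustar γ z) - γ * bU (ustar γ z) := by
      simp only [hfγdef]
    have h2 : ⟪z - y, A (ustar γ z)⟫ = ⟪z, A (ustar γ z)⟫ - ⟪y, A (ustar γ z)⟫ :=
      inner_sub_left _ _ _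
    have h3 : ⟪z - y, A (ustar γ z)⟫
        = ⟪z - y, A (ustar γ y)⟫ + ⟪z - y, A (ustar γ z - ustar γ y)⟫ := by
      rw [map_sub, ← inner_add_right]
      congr 1
      abel
    have h4 : ⟪z - y, A (ustar γ z - ustar γ y)⟫ ≤ ‖A‖ * ‖z - y‖ * ‖ustar γ z - ustar γ y‖ := by
      refine le_trans (real_inner_le_norm _ _) ?_
      have := A.le_opNorm (ustar γ z - ustar γ y)
      have hn : (0:ℝ) ≤ ‖z - y‖ := norm_nonneg _
      nlinarith
    have h5 : ⟪A (ustar γ y), z - y⟫ = ⟪z - y, A (ustar γ y)⟫ := real_inner_comm _ _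
    have h6 : ‖A‖ * ‖z - y‖ * ‖ustar γ z - ustar γ y‖
        ≤ γ/2 * ‖ustar γ z - ustar γ y‖^2 + ‖A‖^2/(2*γ) * ‖z - y‖^2 := by
      have e1 : γ/2 * ‖ustar γ z - ustar γ y‖^2 + ‖A‖^2/(2*γ) * ‖z - y‖^2
          - ‖A‖ * ‖z - y‖ * ‖ustar γ z - ustar γ y‖
          = (γ * ‖ustar γ z - ustar γ y‖ - ‖A‖ * ‖z - y‖)^2 / (2*γ) := by
        field_simp; ring
      have e2 : (0:ℝ) ≤ (γ * ‖ustar γ z - ustar γ y‖ - ‖A‖ * ‖z - y‖)^2 / (2*γ) :=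
        div_nonneg (sq_nonneg _) (by linarith)
      linarith
    rw [hfz]
    linarith [h1, h2, h3, h4, h5, h6]
  -- facts about g
  have hgbot : ∀ y, g y ≠ ⊥ := by
    intro y hb
    rw [hg y, sub_eq_add_neg, EReal.add_eq_bot_iff] at hb
    rcases hb with hb | hb
    · obtain ⟨r0, hr0⟩ := hKne
      have hS : ((⟪y, r0⟫ : ℝ) : EReal) ≤ ⨆ r ∈ K, ((⟪y, r⟫ : ℝ) : EReal) :=
        le_iSup₂ (f := fun r (_ : r ∈ K) => ((⟪y, r⟫ : ℝ) : EReal)) r0 hr0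
      rw [hb] at hS
      exact (EReal.bot_lt_coe _).not_ge hS
    · simp at hb
  have hg0 : g 0 = 0 := by
    rw [hg 0]
    have h1 : ∀ r : EuclideanSpace ℝ (Fin p), ((⟪(0 : EuclideanSpace ℝ (Fin p)), r⟫ : ℝ) : EReal) = (0 : EReal) := by
      intro r; rw [inner_zero_left]; simp
    simp only [h1]
    rw [biSup_const hKne, inner_zero_right]
    simp
  have hgproxfin : ∀ β, 0 < β → ∀ y, g (prox β y) ≠ ⊤ := by
    intro β hβ y htop
    have h1 := hprox β hβ y 0
    rw [htop, hg0, zero_add, EReal.top_add_coe] at h1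
    exact (EReal.coe_lt_top _).not_ge h1
  have hgcoe : ∀ y, g y ≠ ⊤ → g y = ((gR y : ℝ) : EReal) := by
    intro y hy; rw [hgRdef]; exact (EReal.coe_toReal hy (hgbot y)).symm
  have hgR0 : gR 0 = 0 := by rw [hgRdef]; simp [hg0]
  have hsfin : ∀ y, g y ≠ ⊤ → ∀ r ∈ K, ⟪y, r⟫ ≤ gR y + ⟪bvec, y⟫ := by
    intro y hy r hr
    have h1 : ((⟪y, r⟫ : ℝ) : EReal) ≤ ⨆ r ∈ K, ((⟪y, r⟫ : ℝ) : EReal) :=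
      le_iSup₂ (f := fun r (_ : r ∈ K) => ((⟪y, r⟫ : ℝ) : EReal)) r hr
    have h2 : ((⟪y, r⟫ - ⟪bvec, y⟫ : ℝ) : EReal) ≤ g y := by
      rw [hg y, EReal.coe_sub]
      exact EReal.sub_le_sub h1 le_rfl
    rw [hgcoe y hy] at h2
    have := EReal.coe_le_coe_iff.mp h2
    linarith
  have hgcvx : ∀ y z : EuclideanSpace ℝ (Fin p), ∀ t : ℝ, 0 ≤ t → t ≤ 1 → g y ≠ ⊤ → g z ≠ ⊤ →
      g ((1-t) • y + t • z) ≤ (((1-t) * gR y + t * gR z : ℝ) : EReal) := by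
    intro y z t ht0 ht1 hy hz
    rw [hg _]
    have hb : (⨆ r ∈ K, ((⟪(1-t) • y + t • z, r⟫ : ℝ) : EReal))
        ≤ (((1-t) * gR y + t * gR z + ⟪bvec, (1-t) • y + t • z⟫ : ℝ) : EReal) := by
      apply iSup₂_le
      intro r hr
      rw [EReal.coe_le_coe_iff]
      have e1 : ⟪(1-t) • y + t • z, r⟫ = (1-t) * ⟪y, r⟫ + t * ⟪z, r⟫ := by
        rw [inner_add_left, real_inner_smul_left, real_inner_smul_left]
      have e2 : ⟪bvec, (1-t) • y + t • z⟫ = (1-t) * ⟪bvec, y⟫ + t * ⟪bvec, z⟫ := by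
        rw [inner_add_right, real_inner_smul_right, real_inner_smul_right]
      have b1 := hsfin y hy r hr
      have b2 := hsfin z hz r hr
      have c1 : (1-t) * ⟪y, r⟫ ≤ (1-t) * (gR y + ⟪bvec, y⟫) :=
        mul_le_mul_of_nonneg_left b1 (by linarith)
      have c2 : t * ⟪z, r⟫ ≤ t * (gR z + ⟪bvec, z⟫) :=
        mul_le_mul_of_nonneg_left b2 ht0
      rw [e1, e2]
      nlinarith
    have := EReal.sub_le_sub hb (le_refl ((⟪bvec, (1-t) • y + t • z⟫ : ℝ) : EReal))
    rw [← EReal.coe_sub] at this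
    have e3 : (1-t) * gR y + t * gR z + ⟪bvec, (1-t) • y + t • z⟫ - ⟪bvec, (1-t) • y + t • z⟫
        = (1-t) * gR y + t * gR z := by ring
    rw [e3] at this
    exact this
  have hproxR : ∀ β, 0 < β → ∀ w z, g z ≠ ⊤ →
      gR (prox β w) + (2*β)⁻¹ * ‖prox β w - w‖^2 ≤ gR z + (2*β)⁻¹ * ‖z - w‖^2 := by
    intro β hβ w z hz
    have h := hprox β hβ w z
    rw [hgcoe _ (hgproxfin β hβ w), hgcoe z hz, ← EReal.coe_add, ← EReal.coe_add] at h
    exact EReal.coe_le_coe_iff.mp h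
  have hproxS : ∀ β, 0 < β → ∀ w z, g z ≠ ⊤ →
      gR (prox β w) + (2*β)⁻¹*‖prox β w - w‖^2 + (2*β)⁻¹*‖z - prox β w‖^2
        ≤ gR z + (2*β)⁻¹*‖z - w‖^2 := by
    intro β hβ w z hz
    have hqfin : g (prox β w) ≠ ⊤ := hgproxfin β hβ w
    have hc : (0:ℝ) < (2*β)⁻¹ := by positivity
    have key : gR (prox β w)
        ≤ gR z + 2*(2*β)⁻¹*⟪prox β w - w, z - prox β w⟫ := by
      apply aux_t0 _ _ ((2*β)⁻¹ * ‖z - prox β w‖^2)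
      intro t ht0 ht1
      have hcomb := hgcvx (prox β w) z t ht0.le ht1 hqfin hz
      have hcombt : g ((1-t) • prox β w + t • z) ≠ ⊤ :=
        ne_top_of_le_ne_top (EReal.coe_ne_top _) hcomb
      have h2 := hproxR β hβ w ((1-t) • prox β w + t • z) hcombt
      have h3 : gR ((1-t) • prox β w + t • z) ≤ (1-t) * gR (prox β w) + t * gR z := by
        have h := EReal.toReal_le_toReal hcomb (hgbot _) (EReal.coe_ne_top _)
        rw [EReal.toReal_coe] at h
        have e : gR ((1-t) • prox β w + t • z) = (g ((1-t) • prox β w + t • z)).toReal := by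
          rw [hgRdef]
        rw [e]
        exact h
      have h5 : ‖(1-t) • prox β w + t • z - w‖^2
          = ‖prox β w - w‖^2 + 2*(t*⟪prox β w - w, z - prox β w⟫) + t^2*‖z - prox β w‖^2 := by
        rw [show (1-t) • prox β w + t • z - w = (prox β w - w) + t • (z - prox β w) from by module,
          aux_nsq]
      have h6 : t * gR (prox β w)
          ≤ t * (gR z + 2*(2*β)⁻¹*⟪prox β w - w, z - prox β w⟫
              + t * ((2*β)⁻¹ * ‖z - prox β w‖^2)) := by
        nlinarith [h2, h3, h5]
      exact (mul_le_mul_iff_right₀ ht0).mp h6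
    have hexp : (2*β)⁻¹ * ‖z - w‖^2
        = (2*β)⁻¹ * ‖z - prox β w‖^2 + 2*(2*β)⁻¹*⟪z - prox β w, prox β w - w⟫
          + (2*β)⁻¹ * ‖prox β w - w‖^2 := by
      rw [show z - w = (z - prox β w) + (1:ℝ) • (prox β w - w) from by module, aux_nsq]
      ring
    have hcomm : ⟪prox β w - w, z - prox β w⟫ = ⟪z - prox β w, prox β w - w⟫ :=
      real_inner_comm _ _
    rw [hcomm] at key
    linarith [key, hexp]
  -- algorithm facts
  have hγpos : ∀ k : ℕ, 0 < γs (k+1) := by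
    intro k; rw [hγs k]; positivity
  have hτval : ∀ k : ℕ, τ k = 1/((k:ℝ)+1) := hτ
  have hτpos : ∀ k : ℕ, 0 < τ k := by intro k; rw [hτ k]; positivity
  have hτle1 : ∀ k : ℕ, τ k ≤ 1 := by
    intro k; rw [hτ k]
    rw [div_le_one (by positivity)]
    have : (0:ℝ) ≤ (k:ℝ) := Nat.cast_nonneg k
    linarith
  have hgxfin : ∀ k : ℕ, g (x (k+1)) ≠ ⊤ := by
    intro k; rw [hxrec k]
    exact hgproxfin _ (by have := hγpos k; positivity) _
  -- the main recurrence
  have hrec : ∀ k : ℕ,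
      ((k:ℝ)+1) * (fγ (γs (k+1)) (x (k+1)) + gR (x (k+1))) + ‖A‖^2/(2*γ1) * ‖xt (k+1)‖^2
        ≤ (k:ℝ) * (fγ (γs k) (x k) + gR (x k)) - φR (ustar (γs (k+1)) (xh k))
          + ‖A‖^2/(2*γ1) * ‖xt k‖^2 := by
    intro k
    have hγk : 0 < γs (k+1) := hγpos k
    have hγkne : γs (k+1) ≠ 0 := ne_of_gt hγk
    have hAne : ‖A‖ ≠ 0 := ne_of_gt hAnorm
    have hβ : 0 < γs (k+1)/‖A‖^2 := by positivity
    have hτne : τ k ≠ 0 := ne_of_gt (hτpos k)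
    have hk1 : (0:ℝ) < (k:ℝ)+1 := by positivity
    have hzdata : g ((1 - τ k) • x k) ≠ ⊤ ∧ gR ((1 - τ k) • x k) ≤ (1 - τ k) * gR (x k) := by
      cases k with
      | zero =>
        have h0 : (1 - τ 0) = (0:ℝ) := by rw [hτ 0]; norm_num
        rw [h0, zero_smul]
        constructor
        · rw [hg0]; simp
        · rw [hgR0]; simp
      | succ k' =>
        have hfin := hgxfin k'
        have hg0ne : g 0 ≠ ⊤ := by rw [hg0]; simp
        have h := hgcvx (x (k'+1)) 0 (τ (k'+1)) (le_of_lt (hτpos _)) (hτle1 _) hfin hg0ne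
        rw [smul_zero, add_zero, hgR0, mul_zero, add_zero] at h
        constructor
        · exact ne_top_of_le_ne_top (EReal.coe_ne_top _) h
        · have h2 := EReal.toReal_le_toReal h (hgbot _) (EReal.coe_ne_top _)
          rw [EReal.toReal_coe] at h2
          have e : gR ((1 - τ (k'+1)) • x (k'+1)) = (g ((1 - τ (k'+1)) • x (k'+1))).toReal := by
            rw [hgRdef]
          rw [e]
          exact h2
    have s2 := hproxS (γs (k+1)/‖A‖^2) hβ
        (xh k - (γs (k+1)/‖A‖^2) • A (ustar (γs (k+1)) (xh k)))
        ((1 - τ k) • x k) hzdata.1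
    rw [← hxrec k] at s2
    have e1 : (2*(γs (k+1)/‖A‖^2))⁻¹
          * ‖x (k+1) - (xh k - (γs (k+1)/‖A‖^2) • A (ustar (γs (k+1)) (xh k)))‖^2
        = (2*(γs (k+1)/‖A‖^2))⁻¹ * ‖x (k+1) - xh k‖^2
          + ⟪x (k+1) - xh k, A (ustar (γs (k+1)) (xh k))⟫
          + (2*(γs (k+1)/‖A‖^2))⁻¹
            * ((γs (k+1)/‖A‖^2)^2 * ‖A (ustar (γs (k+1)) (xh k))‖^2) := by
      rw [show x (k+1) - (xh k - (γs (k+1)/‖A‖^2) • A (ustar (γs (k+1)) (xh k)))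
          = (x (k+1) - xh k) + (γs (k+1)/‖A‖^2) • A (ustar (γs (k+1)) (xh k)) from by module,
        aux_nsq]
      field_simp
    have e2 : (2*(γs (k+1)/‖A‖^2))⁻¹
          * ‖(1 - τ k) • x k - (xh k - (γs (k+1)/‖A‖^2) • A (ustar (γs (k+1)) (xh k)))‖^2
        = (2*(γs (k+1)/‖A‖^2))⁻¹ * ‖(1 - τ k) • x k - xh k‖^2
          + ⟪(1 - τ k) • x k - xh k, A (ustar (γs (k+1)) (xh k))⟫
          + (2*(γs (k+1)/‖A‖^2))⁻¹
            * ((γs (k+1)/‖A‖^2)^2 * ‖A (ustar (γs (k+1)) (xh k))‖^2) := by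
      rw [show (1 - τ k) • x k - (xh k - (γs (k+1)/‖A‖^2) • A (ustar (γs (k+1)) (xh k)))
          = ((1 - τ k) • x k - xh k) + (γs (k+1)/‖A‖^2) • A (ustar (γs (k+1)) (xh k)) from by
            module,
        aux_nsq]
      field_simp
    have hcρ : (2*(γs (k+1)/‖A‖^2))⁻¹ = ‖A‖^2/(2*γs (k+1)) := by
      field_simp
    have s3 := hlip (γs (k+1)) hγk (xh k) (x (k+1))
    rw [← hcρ] at s3
    have ic1 : ⟪A (ustar (γs (k+1)) (xh k)), x (k+1) - xh k⟫
        = ⟪x (k+1) - xh k, A (ustar (γs (k+1)) (xh k))⟫ := real_inner_comm _ _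
    have s4 : fγ (γs (k+1)) (xh k) + ⟪(1 - τ k) • x k - xh k, A (ustar (γs (k+1)) (xh k))⟫
        ≤ (1 - τ k) * (fγ (γs k) (x k)) - τ k * φR (ustar (γs (k+1)) (xh k)) := by
      have hfxh : fγ (γs (k+1)) (xh k) = ⟪xh k, A (ustar (γs (k+1)) (xh k))⟫
          - φR (ustar (γs (k+1)) (xh k)) - γs (k+1) * bU (ustar (γs (k+1)) (xh k)) := by
        simp only [hfγdef]
      have hinner : ⟪(1 - τ k) • x k - xh k, A (ustar (γs (k+1)) (xh k))⟫
          = (1 - τ k) * ⟪x k, A (ustar (γs (k+1)) (xh k))⟫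
            - ⟪xh k, A (ustar (γs (k+1)) (xh k))⟫ := by
        rw [inner_sub_left, real_inner_smul_left]
      have hb0 := hbU0 (ustar (γs (k+1)) (xh k))
      cases k with
      | zero =>
        have h0 : τ 0 = 1 := by rw [hτ 0]; norm_num
        rw [hfxh, hinner, h0]
        have hbb : 0 ≤ γs 1 * bU (ustar (γs 1) (xh 0)) := mul_nonneg (hγpos 0).le hb0
        nlinarith [hbb]
      | succ k' =>
        have hγa : 0 < γs (k'+1) := hγpos k'
        have hum := humaxR (γs (k'+1)) hγa (x (k'+1)) (ustar (γs (k'+1+1)) (xh (k'+1)))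
            (humem _ (hγpos (k'+1)) _) (hufin _ (hγpos (k'+1)) _)
        have hγrel : γs (k'+1+1) = (1 - τ (k'+1)) * γs (k'+1) := by
          rw [hγs, hγs, hτ]
          push_cast
          field_simp
          ring
        have h1τ : 0 ≤ 1 - τ (k'+1) := by linarith [hτle1 (k'+1)]
        have hcoef : γs (k'+1+1) * bU (ustar (γs (k'+1+1)) (xh (k'+1)))
            = (1 - τ (k'+1)) * (γs (k'+1) * bU (ustar (γs (k'+1+1)) (xh (k'+1)))) := by
          rw [hγrel]; ring
        rw [hfxh, hinner]
        have hmul := mul_le_mul_of_nonneg_left hum h1τ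
        nlinarith [hmul, hcoef]
    have d1 : (1 - τ k) • x k - xh k = -(τ k • xt k) := by rw [hxh k]; module
    have d2 : τ k • xt (k+1) = τ k • xt k - (xh k - x (k+1)) := by
      rw [hxtrec k, smul_sub, smul_smul, mul_inv_cancel₀ hτne, one_smul]
    have d3 : (1 - τ k) • x k - x (k+1) = -(τ k • xt (k+1)) := by
      rw [d2, hxh k]; module
    have n1 : ‖(1 - τ k) • x k - xh k‖^2 = (τ k)^2 * ‖xt k‖^2 := by
      rw [d1, norm_neg, norm_smul, Real.norm_eq_abs, mul_pow, sq_abs]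
    have n2 : ‖(1 - τ k) • x k - x (k+1)‖^2 = (τ k)^2 * ‖xt (k+1)‖^2 := by
      rw [d3, norm_neg, norm_smul, Real.norm_eq_abs, mul_pow, sq_abs]
    have m1 : (2*(γs (k+1)/‖A‖^2))⁻¹ * ‖(1 - τ k) • x k - x (k+1)‖^2
        = ‖A‖^2/(2*γ1*((k:ℝ)+1)) * ‖xt (k+1)‖^2 := by
      rw [n2, hcρ, hγs k, hτ k]
      field_simp
    have m2 : (2*(γs (k+1)/‖A‖^2))⁻¹ * ‖(1 - τ k) • x k - xh k‖^2
        = ‖A‖^2/(2*γ1*((k:ℝ)+1)) * ‖xt k‖^2 := by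
      rw [n1, hcρ, hγs k, hτ k]
      field_simp
    have hchain : fγ (γs (k+1)) (x (k+1)) + gR (x (k+1))
        + ‖A‖^2/(2*γ1*((k:ℝ)+1)) * ‖xt (k+1)‖^2
        ≤ (1 - τ k) * (fγ (γs k) (x k) + gR (x k))
          - τ k * φR (ustar (γs (k+1)) (xh k))
          + ‖A‖^2/(2*γ1*((k:ℝ)+1)) * ‖xt k‖^2 := by
      rw [e1, e2] at s2
      rw [m1, m2] at s2
      linarith [s2, s3, s4, hzdata.2, ic1]
    have hCD : ‖A‖^2/(2*γ1) = ((k:ℝ)+1) * (‖A‖^2/(2*γ1*((k:ℝ)+1))) := by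
      field_simp
    calc ((k:ℝ)+1) * (fγ (γs (k+1)) (x (k+1)) + gR (x (k+1))) + ‖A‖^2/(2*γ1) * ‖xt (k+1)‖^2
        = ((k:ℝ)+1) * ((fγ (γs (k+1)) (x (k+1)) + gR (x (k+1)))
            + ‖A‖^2/(2*γ1*((k:ℝ)+1)) * ‖xt (k+1)‖^2) := by
          rw [hCD]; ring
      _ ≤ ((k:ℝ)+1) * ((1 - τ k) * (fγ (γs k) (x k) + gR (x k))
            - τ k * φR (ustar (γs (k+1)) (xh k))
            + ‖A‖^2/(2*γ1*((k:ℝ)+1)) * ‖xt k‖^2) :=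
          mul_le_mul_of_nonneg_left hchain hk1.le
      _ = (k:ℝ) * (fγ (γs k) (x k) + gR (x k)) - φR (ustar (γs (k+1)) (xh k))
            + ‖A‖^2/(2*γ1) * ‖xt k‖^2 := by
          rw [hτ k]
          field_simp
          ring
  have hsum : ∀ K : ℕ,
      ((K:ℝ)+1) * (fγ (γs (K+1)) (x (K+1)) + gR (x (K+1))) + ‖A‖^2/(2*γ1) * ‖xt (K+1)‖^2
        ≤ ‖A‖^2/(2*γ1) * ‖x 0‖^2
          - ∑ i ∈ Finset.range (K+1), φR (ustar (γs (i+1)) (xh i)) := by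
    intro K
    induction K with
    | zero =>
      have h := hrec 0
      rw [hxt0] at h
      rw [Finset.sum_range_one]
      push_cast at h ⊢
      linarith
    | succ K ih =>
      have h := hrec (K+1)
      rw [Finset.sum_range_succ]
      push_cast at h ih ⊢
      linarith
  have hFlow : ∀ Kk : ℕ, -φstar - γs (Kk+1) * DU
      ≤ fγ (γs (Kk+1)) (x (Kk+1)) + gR (x (Kk+1)) := by
    intro Kk
    have hγ := hγpos Kk
    have hgfin : g (x (Kk+1)) ≠ ⊤ := hgxfin Kk
    have hsup : (⨆ v ∈ U, ((⟪x (Kk+1), A v⟫ : EReal) - φ v))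
        ≤ ((fγ (γs (Kk+1)) (x (Kk+1)) + γs (Kk+1) * DU : ℝ) : EReal) := by
      apply iSup₂_le
      intro v hv
      by_cases hvt : φ v = ⊤
      · rw [hvt, EReal.sub_top]
        exact bot_le
      · rw [hφcoe v hvt, ← EReal.coe_sub, EReal.coe_le_coe_iff]
        have h1 := humaxR (γs (Kk+1)) hγ (x (Kk+1)) v hv hvt
        have h2 : γs (Kk+1) * bU v ≤ γs (Kk+1) * DU :=
          mul_le_mul_of_nonneg_left (hbUD v hv hvt) hγ.le
        linarith
    have hFx : F (x (Kk+1))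
        ≤ ((fγ (γs (Kk+1)) (x (Kk+1)) + γs (Kk+1) * DU + gR (x (Kk+1)) : ℝ) : EReal) := by
      rw [hF (x (Kk+1)), hgcoe _ hgfin, EReal.coe_add]
      exact add_le_add hsup le_rfl
    have hlow : ((-φstar : ℝ) : EReal) ≤ F (x (Kk+1)) := hFs ▸ hxsmin (x (Kk+1))
    have := EReal.coe_le_coe_iff.mp (le_trans hlow hFx)
    linarith
  have hkey : ∀ Kk : ℕ, ∑ i ∈ Finset.range (Kk+1), φR (ustar (γs (i+1)) (xh i))
      ≤ ((Kk:ℝ)+1)*φstar + γ1*DU + ‖A‖^2/(2*γ1) * ‖x 0‖^2 := by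
    intro Kk
    have h1 := hsum Kk
    have h2 := hFlow Kk
    have hk1 : (0:ℝ) < (Kk:ℝ)+1 := by positivity
    have h4 := mul_le_mul_of_nonneg_left h2 hk1.le
    have h3 : ((Kk:ℝ)+1) * γs (Kk+1) = γ1 := by
      rw [hγs Kk]; field_simp
    have h5 : ((Kk:ℝ)+1) * (-φstar - γs (Kk+1) * DU) = -(((Kk:ℝ)+1)*φstar) - γ1*DU := by
      rw [← h3]; ring
    have h6 : (0:ℝ) ≤ ‖A‖^2/(2*γ1) * ‖xt (Kk+1)‖^2 := by positivity
    rw [h5] at h4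
    linarith
  -- Jensen
  have hjen : ∀ (m : ℕ) (v : ℕ → EuclideanSpace ℝ (Fin n)),
      (∀ i, i < m+1 → v i ∈ U ∧ φ (v i) ≠ ⊤) →
      (((m:ℝ)+1)⁻¹ • ∑ i ∈ Finset.range (m+1), v i) ∈ U ∧
      φ (((m:ℝ)+1)⁻¹ • ∑ i ∈ Finset.range (m+1), v i)
        ≤ ((((m:ℝ)+1)⁻¹ * ∑ i ∈ Finset.range (m+1), φR (v i) : ℝ) : EReal) := by
    intro m
    induction m with
    | zero =>
      intro v hv
      have h0 := hv 0 (by norm_num)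
      have e : (((0:ℕ):ℝ)+1)⁻¹ = (1:ℝ) := by norm_num
      rw [Finset.sum_range_one, Finset.sum_range_one, e, one_smul]
      refine ⟨h0.1, ?_⟩
      rw [hφcoe _ h0.2, one_mul]
    | succ m ih =>
      intro v hv
      obtain ⟨ihU, ihφ⟩ := ih v (fun i hi => hv i (by omega))
      have hvm := hv (m+1) (by omega)
      have ha0 : (0:ℝ) ≤ ((m:ℝ)+1)/((m:ℝ)+2) := by positivity
      have hc0 : (0:ℝ) ≤ 1/((m:ℝ)+2) := by positivity
      have hac : ((m:ℝ)+1)/((m:ℝ)+2) + 1/((m:ℝ)+2) = 1 := by field_simp; ring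
      have hpt : ((((m+1:ℕ)):ℝ)+1)⁻¹ • ∑ i ∈ Finset.range (m+1+1), v i
          = (((m:ℝ)+1)/((m:ℝ)+2)) • (((m:ℝ)+1)⁻¹ • ∑ i ∈ Finset.range (m+1), v i)
            + (1/((m:ℝ)+2)) • v (m+1) := by
        have e1 : ((((m+1:ℕ)):ℝ)+1)⁻¹ = ((m:ℝ)+2)⁻¹ := by push_cast; ring_nf
        rw [Finset.sum_range_succ, e1, smul_add, smul_smul]
        congr 1
        · congr 1
          field_simp
        · congr 1
          rw [one_div]
      rw [hpt]
      constructor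
      · exact hUcx ihU hvm.1 ha0 hc0 hac
      · have h1 := hφcx (((m:ℝ)+1)⁻¹ • ∑ i ∈ Finset.range (m+1), v i) (v (m+1))
          (((m:ℝ)+1)/((m:ℝ)+2)) (1/((m:ℝ)+2)) ha0 hc0 hac
        refine le_trans h1 ?_
        have h2 : ((((m:ℝ)+1)/((m:ℝ)+2) : ℝ) : EReal) * φ (((m:ℝ)+1)⁻¹ • ∑ i ∈ Finset.range (m+1), v i)
            ≤ ((((m:ℝ)+1)/((m:ℝ)+2) : ℝ) : EReal) * ((((m:ℝ)+1)⁻¹ * ∑ i ∈ Finset.range (m+1), φR (v i) : ℝ) : EReal) :=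
          mul_le_mul_of_nonneg_left ihφ (by exact_mod_cast ha0)
        have h3 : (((1:ℝ)/((m:ℝ)+2) : ℝ) : EReal) * φ (v (m+1))
            = (((1:ℝ)/((m:ℝ)+2) : ℝ) : EReal) * ((φR (v (m+1)) : ℝ) : EReal) := by
          rw [hφcoe _ hvm.2]
        calc ((((m:ℝ)+1)/((m:ℝ)+2) : ℝ) : EReal) * φ (((m:ℝ)+1)⁻¹ • ∑ i ∈ Finset.range (m+1), v i)
              + (((1:ℝ)/((m:ℝ)+2) : ℝ) : EReal) * φ (v (m+1))
            ≤ ((((m:ℝ)+1)/((m:ℝ)+2) * (((m:ℝ)+1)⁻¹ * ∑ i ∈ Finset.range (m+1), φR (v i)) : ℝ) : EReal)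
              + (((1:ℝ)/((m:ℝ)+2) * φR (v (m+1)) : ℝ) : EReal) := by
              rw [h3, EReal.coe_mul, EReal.coe_mul]
              exact add_le_add h2 le_rfl
          _ = ((((m+1:ℕ):ℝ)+1)⁻¹ * ∑ i ∈ Finset.range (m+1+1), φR (v i) : ℝ) := by
              rw [← EReal.coe_add]
              congr 1
              rw [Finset.sum_range_succ (fun i => φR (v i)) (m+1)]
              push_cast
              have hm1 : ((m:ℝ)+1) ≠ 0 := by positivity
              have hm2 : ((m:ℝ)+2) ≠ 0 := by positivity
              field_simp
              ring
  have hubar2 : ∀ Kk : ℕ, ubar Kk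
      = ((Kk:ℝ)+1)⁻¹ • ∑ i ∈ Finset.range (Kk+1), ustar (γs (i+1)) (xh i) := by
    intro Kk
    rw [hubar Kk]
    have hcong : ∀ i ∈ Finset.range (Kk+1),
        (γs (i+1)/τ i) • ustar (γs (i+1)) (xh i) = γ1 • ustar (γs (i+1)) (xh i) := by
      intro i _
      congr 1
      rw [hγs i, hτ i]
      field_simp
    rw [Finset.sum_congr rfl hcong, ← Finset.smul_sum, smul_smul]
    congr 1
    have hγne : γ1 ≠ 0 := ne_of_gt hγ1
    have hk1 : ((Kk:ℝ)+1) ≠ 0 := by positivity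
    rw [mul_inv]
    field_simp
  -- final assembly
  intro Kk
  obtain ⟨hmem, hφle⟩ := hjen Kk (fun i => ustar (γs (i+1)) (xh i))
    (fun i _ => ⟨humem _ (hγpos i) _, hufin _ (hγpos i) _⟩)
  rw [← hubar2 Kk] at hmem hφle
  have hk1 : (0:ℝ) < (Kk:ℝ)+1 := by positivity
  have hub : φ (ubar Kk) ≤ ((φstar + (γ1*DU + ‖A‖^2/(2*γ1) * ‖x 0‖^2)/((Kk:ℝ)+1) : ℝ) : EReal) := by
    refine le_trans hφle (EReal.coe_le_coe_iff.mpr ?_)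
    have h1 := hkey Kk
    have h2 : ((Kk:ℝ)+1)⁻¹ * ∑ i ∈ Finset.range (Kk+1), φR (ustar (γs (i+1)) (xh i))
        ≤ ((Kk:ℝ)+1)⁻¹ * (((Kk:ℝ)+1)*φstar + γ1*DU + ‖A‖^2/(2*γ1) * ‖x 0‖^2) := by
      apply mul_le_mul_of_nonneg_left h1 (by positivity)
    have h3 : ((Kk:ℝ)+1)⁻¹ * (((Kk:ℝ)+1)*φstar + γ1*DU + ‖A‖^2/(2*γ1) * ‖x 0‖^2)
        = φstar + (γ1*DU + ‖A‖^2/(2*γ1) * ‖x 0‖^2)/((Kk:ℝ)+1) := by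
      field_simp
      ring
    linarith [h2, h3.symm.le, h3.le]
  have hnetop : φ (ubar Kk) ≠ ⊤ := by
    intro h; rw [h] at hub; exact (EReal.coe_lt_top _).not_ge (le_of_eq rfl |>.trans hub)
  refine ⟨hmem, ?_, ?_⟩
  · -- lower bound
    obtain ⟨r, hrK, hrdist⟩ := hKcl.exists_infDist_eq_dist hKne (bvec - A (ubar Kk))
    have hs := hsaddle (ubar Kk) hmem r hrK
    rw [hφcoe _ hnetop] at hs
    have hsR : φstar + ⟪xs, A (ubar Kk) - bvec + r⟫ ≤ φR (ubar Kk) := EReal.coe_le_coe_iff.mp hs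
    rw [hφcoe _ hnetop, ← EReal.coe_sub, EReal.coe_le_coe_iff]
    have h2 : A (ubar Kk) - bvec + r = -((bvec - A (ubar Kk)) - r) := by module
    have h1 : ⟪xs, (bvec - A (ubar Kk)) - r⟫ ≤ ‖xs‖*‖(bvec - A (ubar Kk)) - r‖ :=
      real_inner_le_norm _ _
    rw [h2, inner_neg_right] at hsR
    rw [hrdist, dist_eq_norm]
    linarith
  · -- upper bound
    rw [hφcoe _ hnetop, ← EReal.coe_sub, EReal.coe_le_coe_iff]
    have hubR : φR (ubar Kk) ≤ φstar + (γ1*DU + ‖A‖^2/(2*γ1) * ‖x 0‖^2)/((Kk:ℝ)+1) := by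
      rw [hφcoe _ hnetop] at hub
      exact EReal.coe_le_coe_iff.mp hub
    have hN0 : (0:ℝ) ≤ ‖A‖^2*‖x 0‖^2 := by positivity
    have e : (γ1*DU + ‖A‖^2/(2*γ1)*‖x 0‖^2)*(γ1*((Kk:ℝ)+1))
        = (γ1^2*DU + ‖A‖^2*‖x 0‖^2/2)*((Kk:ℝ)+1) := by
      field_simp
    have inner0 : γ1^2*DU + ‖A‖^2*‖x 0‖^2/2 ≤ ‖A‖^2*‖x 0‖^2 + 2*(γ1+2*γ1^2)*DU := by
      nlinarith [hDU0, hγ1, hN0]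
    have hdiv : (γ1*DU + ‖A‖^2/(2*γ1)*‖x 0‖^2)/((Kk:ℝ)+1)
        ≤ (‖A‖^2 * ‖x 0‖^2 + 2*(γ1 + 2*γ1^2)*DU) / (γ1 * ((Kk:ℝ) + 1)) := by
      rw [div_le_div_iff₀ hk1 (by positivity)]
      calc (γ1*DU + ‖A‖^2/(2*γ1)*‖x 0‖^2)*(γ1*((Kk:ℝ)+1))
          = (γ1^2*DU + ‖A‖^2*‖x 0‖^2/2)*((Kk:ℝ)+1) := e
        _ ≤ (‖A‖^2 * ‖x 0‖^2 + 2*(γ1 + 2*γ1^2)*DU)*((Kk:ℝ)+1) := by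
            apply mul_le_mul_of_nonneg_right inner0 hk1.le
    linarith
end
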